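/- arXiv:1809.00937 — 6 statements merged into one kernel-verified Lean document; each statement's English description precedes it below -/
import Mathlib

section
/- Let p ≥ q > 0 and let Ψ belong to the class Γ_{p,q}. Then for every s > 0 one has min{s^p, s^q} ≤ γ⁻_Ψ(s) ≤ γ⁺_Ψ(s) ≤ max{s^p, s^q}, and moreover (q/p)·γ⁻_Ψ(s)/s ≤ γ⁻_{Ψ'}(s) ≤ γ⁺_{Ψ'}(s) ≤ (p/q)·γ⁺_Ψ(s)/s. -/
open MeasureTheory Set Filter

noncomputable section

/-- Hypothesis (H₀) on the kernel `J`. -/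
def kernelH0 (N : ℕ) (J : EuclideanSpace ℝ (Fin N) → ℝ) (q₀ : ℝ) : Prop :=
  Measurable J ∧ (∀ z : EuclideanSpace ℝ (Fin N), z ≠ 0 → 0 < J z) ∧
    (∀ z : EuclideanSpace ℝ (Fin N), J (-z) = J z) ∧
    (∫⁻ z in {z : EuclideanSpace ℝ (Fin N) | ‖z‖ < 1}, ENNReal.ofReal (J z)) = ⊤ ∧
    0 < q₀ ∧
    (∫⁻ z : EuclideanSpace ℝ (Fin N), ENNReal.ofReal (min 1 (‖z‖ ^ q₀) * J z)) < ⊤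

/-- The class `Γ_{p,q}` of Young functions. -/
def memGamma (Ψ : ℝ → ℝ) (p q : ℝ) : Prop :=
  ConvexOn ℝ Set.univ Ψ ∧ (∀ s, Ψ (-s) = Ψ s) ∧ ContDiff ℝ 1 Ψ ∧
    (∀ s, 0 ≤ Ψ s) ∧ Ψ 0 = 0 ∧ Ψ 1 = 1 ∧
    (∀ s : ℝ, s ≠ 0 → q ≤ s * deriv Ψ s / Ψ s ∧ s * deriv Ψ s / Ψ s ≤ p)

/-- `F(u) = ∫ Ψ(u)`. -/
def funcF (N : ℕ) (Ψ : ℝ → ℝ) (u : EuclideanSpace ℝ (Fin N) → ℝ) : ENNReal :=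
  ∫⁻ x, ENNReal.ofReal (Ψ (u x))

/-- `F(|∇u|) = ∫ Ψ(|∇u|)`. -/
def funcFgrad (N : ℕ) (Ψ : ℝ → ℝ) (u : EuclideanSpace ℝ (Fin N) → ℝ) : ENNReal :=
  ∫⁻ x, ENNReal.ofReal (Ψ ‖fderiv ℝ u x‖)

/-- `E(u) = (1/2) ∬ Ψ(u(x)-u(y)) J(x-y)`. -/
def funcE (N : ℕ) (Ψ : ℝ → ℝ) (J u : EuclideanSpace ℝ (Fin N) → ℝ) : ENNReal :=
  (1 / 2) * ∫⁻ x, ∫⁻ y, ENNReal.ofReal (Ψ (u x - u y) * J (x - y))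

/-- Interaction energy `ℰ(u;φ)` (real-valued). -/
def interE (N : ℕ) (ψ : ℝ → ℝ) (J u φ : EuclideanSpace ℝ (Fin N) → ℝ) : ℝ :=
  (1 / 2) * ∫ x, ∫ y, ψ (u x - u y) * (φ x - φ y) * J (x - y)

/-- Interaction energy `ℰ(u;φ)` (extended-nonnegative-valued version, for integrands
of constant sign). -/
def interEplus (N : ℕ) (ψ : ℝ → ℝ) (J u φ : EuclideanSpace ℝ (Fin N) → ℝ) : ENNReal :=
  (1 / 2) * ∫⁻ x, ∫⁻ y, ENNReal.ofReal (ψ (u x - u y) * (φ x - φ y) * J (x - y))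

/-- The space `W₀^{J,Ψ}(Ω)`. -/
def memW0 (N : ℕ) (Ψ : ℝ → ℝ) (J : EuclideanSpace ℝ (Fin N) → ℝ)
    (Ω : Set (EuclideanSpace ℝ (Fin N))) (u : EuclideanSpace ℝ (Fin N) → ℝ) : Prop :=
  Measurable u ∧ funcF N Ψ u < ⊤ ∧ funcE N Ψ J u < ⊤ ∧ ∀ᵐ x ∂volume, x ∉ Ω → u x = 0

/-- `γ⁻_g(s) = inf_{x>0} g(sx)/g(x)`. -/
def gammaLow (g : ℝ → ℝ) (s : ℝ) : ℝ := sInf {r : ℝ | ∃ x : ℝ, 0 < x ∧ r = g (s * x) / g x}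

/-- `γ⁺_g(s) = sup_{x>0} g(sx)/g(x)`. -/
def gammaHigh (g : ℝ → ℝ) (s : ℝ) : ℝ := sSup {r : ℝ | ∃ x : ℝ, 0 < x ∧ r = g (s * x) / g x}

lemma psiPos (p q : ℝ) (hq : 0 < q) (Ψ : ℝ → ℝ) (hΨ : memGamma Ψ p q) :
    ∀ x : ℝ, x ≠ 0 → 0 < Ψ x := by
  intro x hx
  have h := (hΨ.2.2.2.2.2.2 x hx).1
  rcases (hΨ.2.2.2.1 x).lt_or_eq with h' | h'
  · exact h'
  · rw [← h', div_zero] at h; linarith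

lemma psiDerivBounds (p q : ℝ) (hq : 0 < q) (Ψ : ℝ → ℝ) (hΨ : memGamma Ψ p q) :
    ∀ t : ℝ, 0 < t → q * Ψ t ≤ t * deriv Ψ t ∧ t * deriv Ψ t ≤ p * Ψ t := by
  intro t ht
  have hpos := psiPos p q hq Ψ hΨ t ht.ne'
  have h := hΨ.2.2.2.2.2.2 t ht.ne'
  constructor
  · have := (le_div_iff₀ hpos).mp h.1; linarith
  · have := (div_le_iff₀ hpos).mp h.2; linarith

lemma ratio_bound (p q : ℝ) (hq : 0 < q) (hpq : q ≤ p) (Ψ : ℝ → ℝ)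
    (hΨ : memGamma Ψ p q) (x y : ℝ) (hx : 0 < x) (hxy : x ≤ y) :
    (y / x) ^ q * Ψ x ≤ Ψ y ∧ Ψ y ≤ (y / x) ^ p * Ψ x := by
  have hy : 0 < y := hx.trans_le hxy
  have hΨx := psiPos p q hq Ψ hΨ x hx.ne'
  have hΨy := psiPos p q hq Ψ hΨ y hy.ne'
  have hdiff : Differentiable ℝ Ψ := hΨ.2.2.1.differentiable one_ne_zero
  have hcontlog : ContinuousOn (fun t => Real.log (Ψ t)) (Set.Ioi (0:ℝ)) := by
    intro t ht
    exact ((Real.continuousAt_log (psiPos p q hq Ψ hΨ t (ne_of_gt ht)).ne').comp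
      (hΨ.2.2.1.continuous.continuousAt)).continuousWithinAt
  have hcontlog' : ∀ c : ℝ, ContinuousOn (fun t => c * Real.log t) (Set.Ioi (0:ℝ)) := by
    intro c t ht
    exact (continuousAt_const.mul (Real.continuousAt_log (ne_of_gt ht))).continuousWithinAt
  have hder : ∀ t ∈ Set.Ioi (0:ℝ), ∀ c : ℝ,
      HasDerivAt (fun t => Real.log (Ψ t) - c * Real.log t)
        (deriv Ψ t / Ψ t - c * t⁻¹) t := by
    intro t ht c
    have h1 : HasDerivAt (fun t => Real.log (Ψ t)) (deriv Ψ t / Ψ t) t :=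
      (hdiff t).hasDerivAt.log (psiPos p q hq Ψ hΨ t (ne_of_gt ht)).ne'
    have h2 : HasDerivAt (fun t => c * Real.log t) (c * t⁻¹) t :=
      (Real.hasDerivAt_log (ne_of_gt ht)).const_mul c
    exact h1.sub h2
  have hintio : interior (Set.Ioi (0:ℝ)) = Set.Ioi 0 := interior_Ioi
  -- monotone for q
  have hA : MonotoneOn (fun t => Real.log (Ψ t) - q * Real.log t) (Set.Ioi (0:ℝ)) := by
    apply monotoneOn_of_deriv_nonneg (convex_Ioi 0) (hcontlog.sub (hcontlog' q))
    · rw [hintio]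
      exact fun t ht => ((hder t ht q).differentiableAt).differentiableWithinAt
    · rw [hintio]
      intro t ht
      show 0 ≤ deriv (fun t => Real.log (Ψ t) - q * Real.log t) t
      rw [(hder t ht q).deriv]
      have ht' : (0:ℝ) < t := ht
      have hΨt := psiPos p q hq Ψ hΨ t ht'.ne'
      have hb := (psiDerivBounds p q hq Ψ hΨ t ht').1
      rw [sub_nonneg, mul_comm q t⁻¹, inv_mul_eq_div, div_le_div_iff₀ ht' hΨt]
      linarith [hb, mul_comm t (deriv Ψ t)]
  -- antitone for p (monotone of negation)
  have hB : MonotoneOn (fun t => p * Real.log t - Real.log (Ψ t)) (Set.Ioi (0:ℝ)) := by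
    apply monotoneOn_of_deriv_nonneg (convex_Ioi 0) ((hcontlog' p).sub hcontlog)
    · rw [hintio]
      intro t ht
      have := ((hder t ht p).neg).differentiableAt
      have heq : (fun t => p * Real.log t - Real.log (Ψ t)) =
          fun t => -(Real.log (Ψ t) - p * Real.log t) := by funext u; ring
      show DifferentiableWithinAt ℝ (fun t => p * Real.log t - Real.log (Ψ t)) (Set.Ioi 0) t
      rw [heq]
      exact this.differentiableWithinAt
    · rw [hintio]
      intro t ht
      have heq : (fun t => p * Real.log t - Real.log (Ψ t)) =
          fun t => -(Real.log (Ψ t) - p * Real.log t) := by funext u; ring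
      show 0 ≤ deriv (fun t => p * Real.log t - Real.log (Ψ t)) t
      rw [heq, (show HasDerivAt (fun t => -(Real.log (Ψ t) - p * Real.log t)) _ t from (hder t ht p).neg).deriv]
      have ht' : (0:ℝ) < t := ht
      have hΨt := psiPos p q hq Ψ hΨ t ht'.ne'
      have hb := (psiDerivBounds p q hq Ψ hΨ t ht').2
      rw [neg_sub, sub_nonneg, mul_comm p t⁻¹, inv_mul_eq_div, div_le_div_iff₀ hΨt ht']
      linarith [hb, mul_comm t (deriv Ψ t)]
  have hxm : x ∈ Set.Ioi (0:ℝ) := hx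
  have hym : y ∈ Set.Ioi (0:ℝ) := hy
  have hAxy := hA hxm hym hxy
  have hBxy := hB hxm hym hxy
  simp only [] at hAxy hBxy
  have hlogdiv : Real.log (y / x) = Real.log y - Real.log x := Real.log_div hy.ne' hx.ne'
  constructor
  · rw [Real.rpow_def_of_pos (div_pos hy hx), hlogdiv]
    calc Real.exp ((Real.log y - Real.log x) * q) * Ψ x
        = Real.exp ((Real.log y - Real.log x) * q + Real.log (Ψ x)) := by
          rw [Real.exp_add, Real.exp_log hΨx]
      _ ≤ Real.exp (Real.log (Ψ y)) := Real.exp_le_exp.mpr (by nlinarith)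
      _ = Ψ y := Real.exp_log hΨy
  · rw [Real.rpow_def_of_pos (div_pos hy hx), hlogdiv]
    calc Ψ y = Real.exp (Real.log (Ψ y)) := (Real.exp_log hΨy).symm
      _ ≤ Real.exp ((Real.log y - Real.log x) * p + Real.log (Ψ x)) :=
          Real.exp_le_exp.mpr (by nlinarith)
      _ = Real.exp ((Real.log y - Real.log x) * p) * Ψ x := by
          rw [Real.exp_add, Real.exp_log hΨx]

lemma elem_bound (p q : ℝ) (hq : 0 < q) (hpq : q ≤ p) (Ψ : ℝ → ℝ)
    (hΨ : memGamma Ψ p q) (s : ℝ) (hs : 0 < s) (x : ℝ) (hx : 0 < x) :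
    min (s ^ p) (s ^ q) ≤ Ψ (s * x) / Ψ x ∧ Ψ (s * x) / Ψ x ≤ max (s ^ p) (s ^ q) := by
  have hΨx := psiPos p q hq Ψ hΨ x hx.ne'
  have hsx : 0 < s * x := mul_pos hs hx
  have hΨsx := psiPos p q hq Ψ hΨ (s * x) hsx.ne'
  rcases le_or_gt 1 s with hs1 | hs1
  · have hxy : x ≤ s * x := le_mul_of_one_le_left hx.le hs1
    have hr := ratio_bound p q hq hpq Ψ hΨ x (s * x) hx hxy
    have hdx : s * x / x = s := by field_simp
    rw [hdx] at hr
    constructor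
    · calc min (s ^ p) (s ^ q) ≤ s ^ q := min_le_right _ _
        _ ≤ Ψ (s * x) / Ψ x := (le_div_iff₀ hΨx).mpr hr.1
    · calc Ψ (s * x) / Ψ x ≤ s ^ p := (div_le_iff₀ hΨx).mpr hr.2
        _ ≤ max (s ^ p) (s ^ q) := le_max_left _ _
  · have hxy : s * x ≤ x := by nlinarith
    have hr := ratio_bound p q hq hpq Ψ hΨ (s * x) x hsx hxy
    have hdx : x / (s * x) = s⁻¹ := by field_simp
    rw [hdx, Real.inv_rpow hs.le, Real.inv_rpow hs.le] at hr
    constructor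
    · have h2 := hr.2
      have hsp : (0:ℝ) < s ^ p := Real.rpow_pos_of_pos hs p
      -- Ψ x ≤ (s^p)⁻¹ * Ψ (s*x)  ⟹  s^p ≤ Ψ(s*x)/Ψ x
      have : s ^ p * Ψ x ≤ Ψ (s * x) := by
        rw [inv_mul_eq_div, le_div_iff₀ hsp] at h2; linarith [h2]
      calc min (s ^ p) (s ^ q) ≤ s ^ p := min_le_left _ _
        _ ≤ Ψ (s * x) / Ψ x := (le_div_iff₀ hΨx).mpr this
    · have h1 := hr.1
      have hsq : (0:ℝ) < s ^ q := Real.rpow_pos_of_pos hs q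
      have : Ψ (s * x) ≤ s ^ q * Ψ x := by
        rw [inv_mul_eq_div, div_le_iff₀ hsq] at h1; linarith [h1]
      calc Ψ (s * x) / Ψ x ≤ s ^ q := (div_le_iff₀ hΨx).mpr this
        _ ≤ max (s ^ p) (s ^ q) := le_max_right _ _

theorem stmt0 (p q : ℝ) (hq : 0 < q) (hpq : q ≤ p) (Ψ : ℝ → ℝ)
    (hΨ : memGamma Ψ p q) (s : ℝ) (hs : 0 < s) :
    min (s ^ p) (s ^ q) ≤ gammaLow Ψ s ∧
    gammaLow Ψ s ≤ gammaHigh Ψ s ∧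
    gammaHigh Ψ s ≤ max (s ^ p) (s ^ q) ∧
    q / p * (gammaLow Ψ s / s) ≤ gammaLow (deriv Ψ) s ∧
    gammaLow (deriv Ψ) s ≤ gammaHigh (deriv Ψ) s ∧
    gammaHigh (deriv Ψ) s ≤ p / q * (gammaHigh Ψ s / s) := by
  have hp : 0 < p := hq.trans_le hpq
  set S := {r : ℝ | ∃ x : ℝ, 0 < x ∧ r = Ψ (s * x) / Ψ x} with hS
  set T := {r : ℝ | ∃ x : ℝ, 0 < x ∧ r = deriv Ψ (s * x) / deriv Ψ x} with hT
  have hSne : S.Nonempty := ⟨Ψ (s * 1) / Ψ 1, 1, one_pos, rfl⟩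
  have hTne : T.Nonempty := ⟨deriv Ψ (s * 1) / deriv Ψ 1, 1, one_pos, rfl⟩
  have hSlb : ∀ r ∈ S, min (s ^ p) (s ^ q) ≤ r := by
    rintro r ⟨x, hx, rfl⟩; exact (elem_bound p q hq hpq Ψ hΨ s hs x hx).1
  have hSub : ∀ r ∈ S, r ≤ max (s ^ p) (s ^ q) := by
    rintro r ⟨x, hx, rfl⟩; exact (elem_bound p q hq hpq Ψ hΨ s hs x hx).2
  have hSbdb : BddBelow S := ⟨_, hSlb⟩
  have hSbda : BddAbove S := ⟨_, hSub⟩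
  -- per-element bounds for the deriv ratios
  have hTelem : ∀ x : ℝ, 0 < x →
      q / p * (Ψ (s * x) / Ψ x / s) ≤ deriv Ψ (s * x) / deriv Ψ x ∧
      deriv Ψ (s * x) / deriv Ψ x ≤ p / q * (Ψ (s * x) / Ψ x / s) := by
    intro x hx
    have hsx : 0 < s * x := mul_pos hs hx
    have hΨx := psiPos p q hq Ψ hΨ x hx.ne'
    have hΨsx := psiPos p q hq Ψ hΨ (s * x) hsx.ne'
    have hbx := psiDerivBounds p q hq Ψ hΨ x hx
    have hbsx := psiDerivBounds p q hq Ψ hΨ (s * x) hsx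
    have hdx : 0 < deriv Ψ x := by nlinarith [hbx.1, mul_pos hq hΨx]
    have hdsx : 0 < deriv Ψ (s * x) := by nlinarith [hbsx.1, mul_pos hq hΨsx]
    have hlo : q * Ψ (s * x) / (s * x) ≤ deriv Ψ (s * x) := by
      rw [div_le_iff₀ hsx]; linarith [hbsx.1]
    have hhi : deriv Ψ (s * x) ≤ p * Ψ (s * x) / (s * x) := by
      rw [le_div_iff₀ hsx]; linarith [hbsx.2]
    have hlo' : q * Ψ x / x ≤ deriv Ψ x := by
      rw [div_le_iff₀ hx]; linarith [hbx.1]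
    have hhi' : deriv Ψ x ≤ p * Ψ x / x := by
      rw [le_div_iff₀ hx]; linarith [hbx.2]
    constructor
    · have e : q / p * (Ψ (s * x) / Ψ x / s) = (q * Ψ (s * x) / (s * x)) / (p * Ψ x / x) := by
        field_simp
      rw [e]
      exact div_le_div₀ hdsx.le hlo hdx hhi'
    · have e : p / q * (Ψ (s * x) / Ψ x / s) = (p * Ψ (s * x) / (s * x)) / (q * Ψ x / x) := by
        field_simp
      rw [e]
      apply div_le_div₀ (by positivity) hhi (by positivity) hlo'
  have hqp : (0:ℝ) ≤ q / p := by positivity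
  have hpq' : (0:ℝ) ≤ p / q := by positivity
  have hTlb : ∀ r ∈ T, q / p * (sInf S / s) ≤ r := by
    rintro r ⟨x, hx, rfl⟩
    refine le_trans ?_ (hTelem x hx).1
    have h1 : sInf S ≤ Ψ (s * x) / Ψ x := csInf_le hSbdb ⟨x, hx, rfl⟩
    exact mul_le_mul_of_nonneg_left ((div_le_div_iff_of_pos_right hs).mpr h1) hqp
  have hTub : ∀ r ∈ T, r ≤ p / q * (sSup S / s) := by
    rintro r ⟨x, hx, rfl⟩
    refine le_trans (hTelem x hx).2 ?_
    have h1 : Ψ (s * x) / Ψ x ≤ sSup S := le_csSup hSbda ⟨x, hx, rfl⟩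
    exact mul_le_mul_of_nonneg_left ((div_le_div_iff_of_pos_right hs).mpr h1) hpq'
  have hTbdb : BddBelow T := ⟨_, hTlb⟩
  have hTbda : BddAbove T := ⟨_, hTub⟩
  refine ⟨le_csInf hSne hSlb, csInf_le_csSup hSne hSbdb hSbda, csSup_le hSne hSub,
    le_csInf hTne hTlb, csInf_le_csSup hTne hTbdb hTbda, csSup_le hTne hTub⟩
end
end

section
/- Let J satisfy hypothesis (H₀) with exponent q₀ > 0 and let Ψ ∈ Γ_{p,q} with p ≥ q > q₀. Then there exists a constant c > 0 (depending only on J, Ψ, N) such that every continuously differentiable function u : ℝ^N → ℝ with F(u) < ∞ and F(|∇u|) < ∞ satisfies E(u) ≤ c (F(u) + F(|∇u|)); in particular E(u) < ∞. -/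
open MeasureTheory Set Filter

noncomputable section

open scoped ENNReal

section helpers

lemma ofReal_mul_le_of_le {A A' j : ℝ} (h0 : 0 ≤ A) (hAA' : A ≤ A') :
    ENNReal.ofReal (A * j) ≤ ENNReal.ofReal (A' * j) := by
  rcases le_or_gt 0 j with hj | hj
  · exact ENNReal.ofReal_le_ofReal (mul_le_mul_of_nonneg_right hAA' hj)
  · rw [ENNReal.ofReal_of_nonpos (mul_nonpos_of_nonneg_of_nonpos h0 hj.le)]
    exact zero_le

lemma ofReal_split {d A B j : ℝ} (h0 : 0 ≤ d) (hd : d ≤ A + B) (hA : 0 ≤ A) (hB : 0 ≤ B) :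
    ENNReal.ofReal (d * j) ≤
      ENNReal.ofReal A * ENNReal.ofReal j + ENNReal.ofReal B * ENNReal.ofReal j := by
  rcases le_or_gt 0 j with hj | hj
  · rw [← ENNReal.ofReal_mul hA, ← ENNReal.ofReal_mul hB,
      ← ENNReal.ofReal_add (mul_nonneg hA hj) (mul_nonneg hB hj)]
    exact ENNReal.ofReal_le_ofReal (by nlinarith)
  · rw [ENNReal.ofReal_of_nonpos (mul_nonpos_of_nonneg_of_nonpos h0 hj.le)]
    exact zero_le

end helpers

section psi
variable {Ψ : ℝ → ℝ} {p q : ℝ} (h : memGamma Ψ p q) (hq1 : 1 < q)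
include h hq1

lemma psi_pos {s : ℝ} (hs : s ≠ 0) : 0 < Ψ s := by
  rcases (h.2.2.2.1 s).lt_or_eq with h' | h'
  · exact h'
  · exfalso
    have := (h.2.2.2.2.2.2 s hs).1
    rw [← h', div_zero] at this
    linarith

lemma psi_log_hasDeriv {s : ℝ} (hs : s ≠ 0) {t : ℝ} (ht : t ≠ 0) :
    HasDerivAt (fun t => Real.log (Ψ (t * s))) (deriv Ψ (t * s) * s / Ψ (t * s)) t := by
  have h1 : HasDerivAt (fun t : ℝ => Ψ (t * s)) (deriv Ψ (t * s) * s) t :=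
    ((h.2.2.1.differentiable one_ne_zero (t * s)).hasDerivAt).comp t (hasDerivAt_mul_const s)
  exact h1.log (psi_pos h hq1 (mul_ne_zero ht hs)).ne'

lemma psi_grow_q : ∀ s : ℝ, ∀ l : ℝ, 0 ≤ l → l ≤ 1 → Ψ (l * s) ≤ l ^ q * Ψ s := by
  intro s l hl0 hl1
  rcases eq_or_ne s 0 with rfl | hs
  · simp [h.2.2.2.2.1]
  rcases hl0.eq_or_lt with rfl | hl0'
  · rw [zero_mul, h.2.2.2.2.1, Real.zero_rpow (by linarith), zero_mul]
  set f : ℝ → ℝ := fun t => Real.log (Ψ (t * s)) - q * Real.log t with hf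
  have hder : ∀ t ∈ interior (Ioi (0:ℝ)),
      HasDerivAt f (deriv Ψ (t * s) * s / Ψ (t * s) - q * t⁻¹) t := by
    intro t ht
    rw [interior_Ioi] at ht
    exact (psi_log_hasDeriv h hq1 hs (ne_of_gt ht)).sub
      ((Real.hasDerivAt_log (ne_of_gt ht)).const_mul q)
  have hmono : MonotoneOn f (Ioi (0:ℝ)) := by
    apply monotoneOn_of_hasDerivWithinAt_nonneg (convex_Ioi 0)
      (fun t ht => ((hder t (by rwa [interior_Ioi])).continuousAt).continuousWithinAt)
      (fun t ht => (hder t ht).hasDerivWithinAt)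
    intro t ht
    rw [interior_Ioi] at ht
    have hts : t * s ≠ 0 := mul_ne_zero (ne_of_gt ht) hs
    have hb := (h.2.2.2.2.2.2 (t * s) hts).1
    have hP : 0 < Ψ (t * s) := psi_pos h hq1 hts
    rw [le_div_iff₀ hP] at hb
    rw [sub_nonneg, show q * t⁻¹ = q / t from (div_eq_mul_inv q t).symm,
      div_le_div_iff₀ ht hP]
    nlinarith
  have key := hmono (mem_Ioi.2 hl0') (mem_Ioi.2 one_pos) hl1
  have hPl : 0 < Ψ (l * s) := psi_pos h hq1 (mul_ne_zero (ne_of_gt hl0') hs)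
  have hPs : 0 < Ψ s := psi_pos h hq1 hs
  have hrp : (0:ℝ) < l ^ q := Real.rpow_pos_of_pos hl0' q
  rw [← Real.log_le_log_iff hPl (by positivity)]
  have : Real.log (l ^ q * Ψ s) = q * Real.log l + Real.log (Ψ s) := by
    rw [Real.log_mul (ne_of_gt hrp) (ne_of_gt hPs), Real.log_rpow hl0']
  rw [this]
  simp only [hf, one_mul, Real.log_one, mul_zero, sub_zero] at key
  linarith

lemma psi_grow_p : ∀ s : ℝ, ∀ l : ℝ, 1 ≤ l → Ψ (l * s) ≤ l ^ p * Ψ s := by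
  intro s l hl1
  have hl0' : (0:ℝ) < l := lt_of_lt_of_le one_pos hl1
  rcases eq_or_ne s 0 with rfl | hs
  · simp [h.2.2.2.2.1]
  set f : ℝ → ℝ := fun t => p * Real.log t - Real.log (Ψ (t * s)) with hf
  have hder : ∀ t ∈ interior (Ioi (0:ℝ)),
      HasDerivAt f (p * t⁻¹ - deriv Ψ (t * s) * s / Ψ (t * s)) t := by
    intro t ht
    rw [interior_Ioi] at ht
    exact ((Real.hasDerivAt_log (ne_of_gt ht)).const_mul p).sub
      (psi_log_hasDeriv h hq1 hs (ne_of_gt ht))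
  have hmono : MonotoneOn f (Ioi (0:ℝ)) := by
    apply monotoneOn_of_hasDerivWithinAt_nonneg (convex_Ioi 0)
      (fun t ht => ((hder t (by rwa [interior_Ioi])).continuousAt).continuousWithinAt)
      (fun t ht => (hder t ht).hasDerivWithinAt)
    intro t ht
    rw [interior_Ioi] at ht
    have hts : t * s ≠ 0 := mul_ne_zero (ne_of_gt ht) hs
    have hb := (h.2.2.2.2.2.2 (t * s) hts).2
    have hP : 0 < Ψ (t * s) := psi_pos h hq1 hts
    rw [div_le_iff₀ hP] at hb
    rw [sub_nonneg, show p * t⁻¹ = p / t from (div_eq_mul_inv p t).symm,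
      div_le_div_iff₀ hP ht]
    nlinarith
  have key := hmono (mem_Ioi.2 one_pos) (mem_Ioi.2 hl0') hl1
  have hPl : 0 < Ψ (l * s) := psi_pos h hq1 (mul_ne_zero (ne_of_gt hl0') hs)
  have hPs : 0 < Ψ s := psi_pos h hq1 hs
  have hrp : (0:ℝ) < l ^ p := Real.rpow_pos_of_pos hl0' p
  rw [← Real.log_le_log_iff hPl (by positivity)]
  have : Real.log (l ^ p * Ψ s) = p * Real.log l + Real.log (Ψ s) := by
    rw [Real.log_mul (ne_of_gt hrp) (ne_of_gt hPs), Real.log_rpow hl0']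
  rw [this]
  simp only [hf, one_mul, Real.log_one, mul_zero, sub_zero] at key
  linarith

omit hq1 in
lemma psi_even' (x : ℝ) : Ψ |x| = Ψ x := by
  rcases abs_choice x with h' | h'
  · rw [h']
  · rw [h', h.2.1]

lemma psi_mono_abs {x y : ℝ} (hxy : |x| ≤ |y|) : Ψ x ≤ Ψ y := by
  rw [← psi_even' h x, ← psi_even' h y]
  have hseg : |x| ∈ segment ℝ (-|y|) |y| := by
    rw [segment_eq_Icc (by linarith [abs_nonneg y] : -|y| ≤ |y|)]
    constructor <;> [linarith [abs_nonneg x]; exact hxy]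
  calc Ψ |x| ≤ max (Ψ (-|y|)) (Ψ |y|) :=
        h.1.le_max_of_mem_segment (mem_univ _) (mem_univ _) hseg
    _ = Ψ |y| := by rw [h.2.1, max_self]

lemma psi_sub_le (a b : ℝ) : Ψ (a - b) ≤ 2 ^ p * Ψ a + 2 ^ p * Ψ b := by
  have h1 : Ψ (a - b) ≤ Ψ (|a| + |b|) := by
    apply psi_mono_abs h hq1
    rw [abs_of_nonneg (by positivity : (0:ℝ) ≤ |a| + |b|)]
    exact abs_sub a b
  have h2 : Ψ (|a| + |b|) ≤ (1/2) * Ψ (2 * |a|) + (1/2) * Ψ (2 * |b|) := by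
    have := h.1.2 (mem_univ (2 * |a|)) (mem_univ (2 * |b|))
      (by norm_num : (0:ℝ) ≤ 1/2) (by norm_num : (0:ℝ) ≤ 1/2) (by norm_num)
    simpa [smul_eq_mul, show (1/2:ℝ) * (2 * |a|) + (1/2) * (2 * |b|) = |a| + |b| by ring]
      using this
  have h3 : Ψ (2 * |a|) ≤ 2 ^ p * Ψ a := by
    rw [← psi_even' h a]; exact psi_grow_p h hq1 |a| 2 one_le_two
  have h4 : Ψ (2 * |b|) ≤ 2 ^ p * Ψ b := by
    rw [← psi_even' h b]; exact psi_grow_p h hq1 |b| 2 one_le_two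
  have hnn := h.2.2.2.1
  have h2p : (0:ℝ) < 2 ^ p := Real.rpow_pos_of_pos two_pos p
  nlinarith [hnn a, hnn b]

end psi

section near

lemma near_bound {N : ℕ} {Ψ : ℝ → ℝ} {p q : ℝ} (h : memGamma Ψ p q) (hq1 : 1 < q)
    (u : EuclideanSpace ℝ (Fin N) → ℝ) (hu : ContDiff ℝ 1 u)
    (x z : EuclideanSpace ℝ (Fin N)) (hz : ‖z‖ ≤ 1) :
    Ψ (u x - u (x - z)) ≤
      ‖z‖ ^ q * ∫ t in Ioc (0:ℝ) 1, Ψ ‖fderiv ℝ u (x + (t-1) • z)‖ := by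
  have hcont : Continuous Ψ := h.2.2.1.continuous
  set γ : ℝ → EuclideanSpace ℝ (Fin N) := fun t => x + (t - 1) • z with hγdef
  have hγc : Continuous γ := by fun_prop
  have hγ : ∀ t : ℝ, HasDerivAt γ z t := by
    intro t
    have h1 : HasDerivAt (fun t : ℝ => t - 1) 1 t := (hasDerivAt_id t).sub_const 1
    have h2 : HasDerivAt (fun t : ℝ => (t - 1) • z) ((1:ℝ) • z) t := h1.smul_const z
    simpa only [one_smul] using h2.const_add x
  set f : ℝ → ℝ := fun t => (fderiv ℝ u (γ t)) z with hfdef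
  have hfc : Continuous f :=
    Continuous.clm_apply ((hu.continuous_fderiv one_ne_zero).comp hγc) continuous_const
  have hder : ∀ t : ℝ, HasDerivAt (fun τ => u (γ τ)) (f t) t := fun t =>
    (hu.differentiable one_ne_zero (γ t)).hasFDerivAt.comp_hasDerivAt t (hγ t)
  have hγ1 : γ 1 = x := by simp [hγdef]
  have hγ0 : γ 0 = x - z := by
    simp only [hγdef, zero_sub, neg_smul, one_smul, ← sub_eq_add_neg]
  have hftc : ∫ t in (0:ℝ)..1, f t = u x - u (x - z) := by
    rw [intervalIntegral.integral_eq_sub_of_hasDerivAt (fun t _ => hder t)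
      (hfc.intervalIntegrable 0 1), hγ1, hγ0]
  have hset : ∫ t in (0:ℝ)..1, f t = ∫ t in Ioc (0:ℝ) 1, f t :=
    intervalIntegral.integral_of_le zero_le_one
  haveI : IsProbabilityMeasure (volume.restrict (Ioc (0:ℝ) 1)) := ⟨by simp⟩
  have hfi : Integrable f (volume.restrict (Ioc (0:ℝ) 1)) := hfc.integrableOn_Ioc
  have hΨfi : Integrable (Ψ ∘ f) (volume.restrict (Ioc (0:ℝ) 1)) :=
    (hcont.comp hfc).integrableOn_Ioc
  have hjensen : Ψ (∫ t in Ioc (0:ℝ) 1, f t) ≤ ∫ t in Ioc (0:ℝ) 1, Ψ (f t) :=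
    h.1.map_integral_le hcont.continuousOn isClosed_univ
      (Filter.Eventually.of_forall fun _ => mem_univ _) hfi hΨfi
  have hpt : ∀ t : ℝ, Ψ (f t) ≤ ‖z‖ ^ q * Ψ ‖fderiv ℝ u (γ t)‖ := by
    intro t
    have h1 : Ψ (f t) ≤ Ψ (‖z‖ * ‖fderiv ℝ u (γ t)‖) := by
      apply psi_mono_abs h hq1
      rw [abs_of_nonneg (mul_nonneg (norm_nonneg z) (norm_nonneg _))]
      calc |f t| = ‖(fderiv ℝ u (γ t)) z‖ := (Real.norm_eq_abs _).symm
        _ ≤ ‖fderiv ℝ u (γ t)‖ * ‖z‖ := (fderiv ℝ u (γ t)).le_opNorm z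
        _ = ‖z‖ * ‖fderiv ℝ u (γ t)‖ := mul_comm _ _
    exact h1.trans (psi_grow_q h hq1 _ _ (norm_nonneg z) hz)
  have hint2 : ∫ t in Ioc (0:ℝ) 1, Ψ (f t) ≤
      ∫ t in Ioc (0:ℝ) 1, ‖z‖ ^ q * Ψ ‖fderiv ℝ u (γ t)‖ := by
    apply integral_mono hΨfi
    · exact Continuous.integrableOn_Ioc (by
        exact continuous_const.mul (hcont.comp
          (continuous_norm.comp ((hu.continuous_fderiv one_ne_zero).comp hγc))))
    · exact hpt
  calc Ψ (u x - u (x - z)) = Ψ (∫ t in Ioc (0:ℝ) 1, f t) := by rw [← hset, hftc]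
    _ ≤ ∫ t in Ioc (0:ℝ) 1, Ψ (f t) := hjensen
    _ ≤ ∫ t in Ioc (0:ℝ) 1, ‖z‖ ^ q * Ψ ‖fderiv ℝ u (γ t)‖ := hint2
    _ = ‖z‖ ^ q * ∫ t in Ioc (0:ℝ) 1, Ψ ‖fderiv ℝ u (γ t)‖ := integral_const_mul _ _

end near
theorem stmt2 (N : ℕ) (q₀ : ℝ) (J : EuclideanSpace ℝ (Fin N) → ℝ) (hJ : kernelH0 N J q₀)
    (p q : ℝ) (hq1 : 1 < q) (hq0 : q₀ < q) (hpq : q ≤ p)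
    (Ψ : ℝ → ℝ) (hΨ : memGamma Ψ p q) :
    ∃ c : ℝ, 0 < c ∧ ∀ u : EuclideanSpace ℝ (Fin N) → ℝ, ContDiff ℝ 1 u →
      funcF N Ψ u < ⊤ → funcFgrad N Ψ u < ⊤ →
      funcE N Ψ J u ≤ ENNReal.ofReal c * (funcF N Ψ u + funcFgrad N Ψ u) := by
  obtain ⟨hJm, hJpos, hJsymm, hJinf, hq₀pos, hJfin⟩ := hJ
  have hcontΨ : Continuous Ψ := hΨ.2.2.1.continuous
  have hnn := hΨ.2.2.2.1
  set κ : ℝ≥0∞ := ∫⁻ z : EuclideanSpace ℝ (Fin N), ENNReal.ofReal (min 1 (‖z‖ ^ q₀) * J z)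
    with hκdef
  have hκ : κ < ⊤ := hJfin
  have h2p1 : (1:ℝ) ≤ 2 ^ p := Real.one_le_rpow one_le_two (by linarith)
  have h2p0 : (0:ℝ) < 2 ^ p := Real.rpow_pos_of_pos two_pos p
  have hκ0 : (0:ℝ) ≤ κ.toReal := ENNReal.toReal_nonneg
  refine ⟨3 * 2 ^ p * (κ.toReal + 1), by positivity, ?_⟩
  intro u hu hF hFg
  have hucont : Continuous u := hu.continuous
  set S : Set (EuclideanSpace ℝ (Fin N)) := {z | ‖z‖ < 1} with hSdef
  have hS : MeasurableSet S := (isOpen_lt continuous_norm continuous_const).measurableSet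
  set G : EuclideanSpace ℝ (Fin N) → EuclideanSpace ℝ (Fin N) → ℝ≥0∞ :=
    fun x z => ENNReal.ofReal (Ψ (u x - u (x - z)) * J z) with hGdef
  have hGm : Measurable (Function.uncurry G) := by
    apply ENNReal.measurable_ofReal.comp
    exact ((hcontΨ.comp ((hucont.comp continuous_fst).sub
      (hucont.comp (continuous_fst.sub continuous_snd)))).measurable).mul
      (hJm.comp measurable_snd)
  have hΨum : Measurable fun x => ENNReal.ofReal (Ψ (u x)) :=
    ENNReal.measurable_ofReal.comp (hcontΨ.comp hucont).measurable
  have hJom : Measurable fun z => ENNReal.ofReal (J z) := ENNReal.measurable_ofReal.comp hJm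
  set κf : ℝ≥0∞ := ∫⁻ z in Sᶜ, ENNReal.ofReal (J z) with hκfdef
  -- far-field kernel bound
  have hfar : κf ≤ κ := by
    have heq : κf = ∫⁻ z in Sᶜ, ENNReal.ofReal (min 1 (‖z‖ ^ q₀) * J z) := by
      apply setLIntegral_congr_fun hS.compl
      intro z hz
      have h1 : (1:ℝ) ≤ ‖z‖ := by
        have : ¬ ‖z‖ < 1 := hz
        linarith [not_lt.1 this]
      beta_reduce
      rw [min_eq_left (Real.one_le_rpow h1 hq₀pos.le), one_mul]
    rw [heq]
    exact setLIntegral_le_lintegral _ _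
  -- near-field kernel bound
  have hnear : (∫⁻ z in S, ENNReal.ofReal (‖z‖ ^ q * J z)) ≤ κ := by
    calc ∫⁻ z in S, ENNReal.ofReal (‖z‖ ^ q * J z)
        ≤ ∫⁻ z in S, ENNReal.ofReal (min 1 (‖z‖ ^ q₀) * J z) := by
          apply setLIntegral_mono' hS
          intro z hz
          have hz1 : ‖z‖ < 1 := hz
          apply ofReal_mul_le_of_le (Real.rpow_nonneg (norm_nonneg z) q)
          rcases eq_or_ne ‖z‖ 0 with h0 | h0
          · rw [h0, Real.zero_rpow (by linarith), Real.zero_rpow (by linarith :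
              q₀ ≠ 0)]
            norm_num
          · apply le_min
            · exact Real.rpow_le_one (norm_nonneg z) hz1.le (by linarith)
            · exact Real.rpow_le_rpow_of_exponent_ge
                (lt_of_le_of_ne (norm_nonneg z) (Ne.symm h0)) hz1.le (by linarith)
      _ ≤ κ := setLIntegral_le_lintegral _ _
  -- rewrite the energy
  have hE : funcE N Ψ J u = (1/2) * ∫⁻ x, ((∫⁻ z in S, G x z) + ∫⁻ z in Sᶜ, G x z) := by
    unfold funcE
    congr 1
    refine lintegral_congr fun x => ?_
    have hm : Measurable fun y => ENNReal.ofReal (Ψ (u x - u y) * J (x - y)) := by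
      apply ENNReal.measurable_ofReal.comp
      exact ((hcontΨ.comp (continuous_const.sub hucont)).measurable).mul
        (hJm.comp (measurable_const.sub measurable_id))
    rw [← (Measure.measurePreserving_sub_left volume x).lintegral_comp hm,
      lintegral_add_compl (fun z => G x z) hS]
    exact lintegral_congr fun z => by simp [hGdef, sub_sub_cancel]
  set T1 : ℝ≥0∞ := ∫⁻ z in S, ∫⁻ x, G x z with hT1def
  set T2 : ℝ≥0∞ := ∫⁻ x, ∫⁻ z in Sᶜ, G x z with hT2def
  have hmeas1 : Measurable fun x => ∫⁻ z in S, G x z :=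
    Measurable.lintegral_prod_right hGm
  have hEeq : funcE N Ψ J u = (1/2) * (T1 + T2) := by
    rw [hE, lintegral_add_left hmeas1, lintegral_lintegral_swap hGm.aemeasurable]
  -- near-field energy bound
  have hT1 : T1 ≤ funcFgrad N Ψ u * κ := by
    have hzb : ∀ z : EuclideanSpace ℝ (Fin N), ‖z‖ ≤ 1 →
        (∫⁻ x, G x z) ≤ funcFgrad N Ψ u * ENNReal.ofReal (‖z‖ ^ q * J z) := by
      intro z hz
      set H : EuclideanSpace ℝ (Fin N) → ℝ≥0∞ := fun x =>
        ∫⁻ t in Ioc (0:ℝ) 1, ENNReal.ofReal (Ψ ‖fderiv ℝ u (x + (t-1) • z)‖) with hHdef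
      have hgrad_cont : Continuous fun w => fderiv ℝ u w := hu.continuous_fderiv one_ne_zero
      have hFm : Measurable (Function.uncurry fun (x : EuclideanSpace ℝ (Fin N)) (t : ℝ) =>
          ENNReal.ofReal (Ψ ‖fderiv ℝ u (x + (t-1) • z)‖)) := by
        apply ENNReal.measurable_ofReal.comp
        apply Continuous.measurable
        exact hcontΨ.comp (continuous_norm.comp (hgrad_cont.comp
          (continuous_fst.add ((continuous_snd.sub continuous_const).smul
            continuous_const))))
      have hHm : Measurable H := Measurable.lintegral_prod_right hFm
      have hpt : ∀ x, G x z ≤ H x * ENNReal.ofReal (‖z‖ ^ q * J z) := by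
        intro x
        set g : ℝ := ∫ t in Ioc (0:ℝ) 1, Ψ ‖fderiv ℝ u (x + (t-1) • z)‖ with hgdef
        have hg0 : 0 ≤ g := integral_nonneg fun t => hnn _
        have hgi : Integrable (fun t => Ψ ‖fderiv ℝ u (x + (t-1) • z)‖)
            (volume.restrict (Ioc (0:ℝ) 1)) := by
          apply Continuous.integrableOn_Ioc
          exact hcontΨ.comp (continuous_norm.comp (hgrad_cont.comp
            (continuous_const.add ((continuous_id.sub continuous_const).smul
              continuous_const))))
        have step1 : G x z ≤ ENNReal.ofReal ((‖z‖ ^ q * g) * J z) :=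
          ofReal_mul_le_of_le (hnn _) (near_bound hΨ hq1 u hu x z hz)
        have step2 : ENNReal.ofReal ((‖z‖ ^ q * g) * J z)
            = ENNReal.ofReal g * ENNReal.ofReal (‖z‖ ^ q * J z) := by
          rw [← ENNReal.ofReal_mul hg0]
          ring_nf
        have step3 : ENNReal.ofReal g = H x :=
          ofReal_integral_eq_lintegral_ofReal hgi
            (Filter.Eventually.of_forall fun t => hnn _)
        calc G x z ≤ ENNReal.ofReal ((‖z‖ ^ q * g) * J z) := step1
          _ = H x * ENNReal.ofReal (‖z‖ ^ q * J z) := by rw [step2, step3]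
      have hHint : (∫⁻ x, H x) = funcFgrad N Ψ u := by
        rw [hHdef, lintegral_lintegral_swap hFm.aemeasurable]
        have hin : ∀ t : ℝ,
            (∫⁻ x, ENNReal.ofReal (Ψ ‖fderiv ℝ u (x + (t-1) • z)‖)) = funcFgrad N Ψ u :=
          fun t => lintegral_add_right_eq_self
            (fun w => ENNReal.ofReal (Ψ ‖fderiv ℝ u w‖)) ((t-1) • z)
        calc ∫⁻ t in Ioc (0:ℝ) 1, ∫⁻ x, ENNReal.ofReal (Ψ ‖fderiv ℝ u (x + (t-1) • z)‖)
            = ∫⁻ _t in Ioc (0:ℝ) 1, funcFgrad N Ψ u :=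
              setLIntegral_congr_fun measurableSet_Ioc
                (fun t _ => hin t)
          _ = funcFgrad N Ψ u := by rw [setLIntegral_const]; simp [Real.volume_Ioc]
      calc (∫⁻ x, G x z) ≤ ∫⁻ x, H x * ENNReal.ofReal (‖z‖ ^ q * J z) :=
            lintegral_mono hpt
        _ = (∫⁻ x, H x) * ENNReal.ofReal (‖z‖ ^ q * J z) := lintegral_mul_const _ hHm
        _ = funcFgrad N Ψ u * ENNReal.ofReal (‖z‖ ^ q * J z) := by rw [hHint]
    calc T1 ≤ ∫⁻ z in S, funcFgrad N Ψ u * ENNReal.ofReal (‖z‖ ^ q * J z) :=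
          setLIntegral_mono' hS fun z hz => hzb z (le_of_lt hz)
      _ = funcFgrad N Ψ u * ∫⁻ z in S, ENNReal.ofReal (‖z‖ ^ q * J z) :=
          lintegral_const_mul _ (ENNReal.measurable_ofReal.comp
            (((Real.continuous_rpow_const (by linarith : (0:ℝ) ≤ q)).comp
              continuous_norm).measurable.mul hJm))
      _ ≤ funcFgrad N Ψ u * κ := mul_le_mul_right hnear _
  -- far-field energy bound
  have hT2 : T2 ≤ ENNReal.ofReal (2 ^ p) * funcF N Ψ u * κf
      + ENNReal.ofReal (2 ^ p) * funcF N Ψ u * κf := by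
    have hptw : ∀ x z, G x z ≤
        ENNReal.ofReal (2 ^ p * Ψ (u x)) * ENNReal.ofReal (J z)
        + ENNReal.ofReal (2 ^ p * Ψ (u (x - z))) * ENNReal.ofReal (J z) := by
      intro x z
      exact ofReal_split (hnn _) (psi_sub_le hΨ hq1 (u x) (u (x - z)))
        (mul_nonneg h2p0.le (hnn _)) (mul_nonneg h2p0.le (hnn _))
    have hg1z : ∀ x, Measurable fun z : EuclideanSpace ℝ (Fin N) =>
        ENNReal.ofReal (2 ^ p * Ψ (u x)) * ENNReal.ofReal (J z) :=
      fun x => hJom.const_mul _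
    have hmeasx : Measurable fun x : EuclideanSpace ℝ (Fin N) =>
        ENNReal.ofReal (2 ^ p * Ψ (u x)) :=
      ENNReal.measurable_ofReal.comp
        ((continuous_const.mul (hcontΨ.comp hucont)).measurable)
    have step : T2 ≤ ∫⁻ x, (ENNReal.ofReal (2 ^ p * Ψ (u x)) * κf
        + ∫⁻ z in Sᶜ, ENNReal.ofReal (2 ^ p * Ψ (u (x - z))) * ENNReal.ofReal (J z)) := by
      apply lintegral_mono
      intro x
      calc (∫⁻ z in Sᶜ, G x z)
          ≤ ∫⁻ z in Sᶜ, (ENNReal.ofReal (2 ^ p * Ψ (u x)) * ENNReal.ofReal (J z)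
            + ENNReal.ofReal (2 ^ p * Ψ (u (x - z))) * ENNReal.ofReal (J z)) :=
            lintegral_mono fun z => hptw x z
        _ = (∫⁻ z in Sᶜ, ENNReal.ofReal (2 ^ p * Ψ (u x)) * ENNReal.ofReal (J z))
            + ∫⁻ z in Sᶜ, ENNReal.ofReal (2 ^ p * Ψ (u (x - z))) * ENNReal.ofReal (J z) :=
            lintegral_add_left (hg1z x) _
        _ = ENNReal.ofReal (2 ^ p * Ψ (u x)) * κf
            + ∫⁻ z in Sᶜ, ENNReal.ofReal (2 ^ p * Ψ (u (x - z))) * ENNReal.ofReal (J z) := by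
            rw [lintegral_const_mul _ hJom]
    have hg2m : Measurable (Function.uncurry
        fun (x z : EuclideanSpace ℝ (Fin N)) =>
          ENNReal.ofReal (2 ^ p * Ψ (u (x - z))) * ENNReal.ofReal (J z)) := by
      apply Measurable.mul
        (f := fun w : EuclideanSpace ℝ (Fin N) × EuclideanSpace ℝ (Fin N) =>
          ENNReal.ofReal (2 ^ p * Ψ (u (w.1 - w.2))))
        (g := fun w => ENNReal.ofReal (J w.2))
      · exact ENNReal.measurable_ofReal.comp
          ((continuous_const.mul (hcontΨ.comp (hucont.comp
            (continuous_fst.sub continuous_snd)))).measurable)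
      · exact hJom.comp measurable_snd
    have hterm1 : (∫⁻ x, ENNReal.ofReal (2 ^ p * Ψ (u x)) * κf)
        = ENNReal.ofReal (2 ^ p) * funcF N Ψ u * κf := by
      rw [lintegral_mul_const _ hmeasx]
      congr 1
      simp_rw [ENNReal.ofReal_mul h2p0.le]
      rw [lintegral_const_mul _ hΨum]
      rfl
    have hterm2 : (∫⁻ x, ∫⁻ z in Sᶜ,
        ENNReal.ofReal (2 ^ p * Ψ (u (x - z))) * ENNReal.ofReal (J z))
        = ENNReal.ofReal (2 ^ p) * funcF N Ψ u * κf := by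
      rw [lintegral_lintegral_swap hg2m.aemeasurable]
      have hin : ∀ z : EuclideanSpace ℝ (Fin N),
          (∫⁻ x, ENNReal.ofReal (2 ^ p * Ψ (u (x - z))) * ENNReal.ofReal (J z))
          = (ENNReal.ofReal (2 ^ p) * funcF N Ψ u) * ENNReal.ofReal (J z) := by
        intro z
        have hmz : Measurable fun x : EuclideanSpace ℝ (Fin N) =>
            ENNReal.ofReal (2 ^ p * Ψ (u (x - z))) :=
          ENNReal.measurable_ofReal.comp
            ((continuous_const.mul (hcontΨ.comp (hucont.comp
              (continuous_id.sub continuous_const)))).measurable)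
        rw [lintegral_mul_const _ hmz]
        congr 1
        have htr : (∫⁻ x, ENNReal.ofReal (2 ^ p * Ψ (u (x - z))))
            = ∫⁻ x, ENNReal.ofReal (2 ^ p * Ψ (u x)) :=
          lintegral_sub_right_eq_self (fun w => ENNReal.ofReal (2 ^ p * Ψ (u w))) z
        rw [htr]
        simp_rw [ENNReal.ofReal_mul h2p0.le]
        rw [lintegral_const_mul _ hΨum]
        rfl
      calc (∫⁻ z in Sᶜ, ∫⁻ x,
            ENNReal.ofReal (2 ^ p * Ψ (u (x - z))) * ENNReal.ofReal (J z))
          = ∫⁻ z in Sᶜ, (ENNReal.ofReal (2 ^ p) * funcF N Ψ u) * ENNReal.ofReal (J z) :=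
            setLIntegral_congr_fun hS.compl
              (fun z _ => hin z)
        _ = (ENNReal.ofReal (2 ^ p) * funcF N Ψ u) * κf := lintegral_const_mul _ hJom
    calc T2 ≤ _ := step
      _ = (∫⁻ x, ENNReal.ofReal (2 ^ p * Ψ (u x)) * κf)
          + ∫⁻ x, ∫⁻ z in Sᶜ,
            ENNReal.ofReal (2 ^ p * Ψ (u (x - z))) * ENNReal.ofReal (J z) :=
          lintegral_add_left (hmeasx.mul_const _) _
      _ = ENNReal.ofReal (2 ^ p) * funcF N Ψ u * κf
          + ENNReal.ofReal (2 ^ p) * funcF N Ψ u * κf := by rw [hterm1, hterm2]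
  -- final assembly
  set P : ℝ≥0∞ := ENNReal.ofReal (2 ^ p) with hPdef
  set K : ℝ≥0∞ := ENNReal.ofReal (κ.toReal + 1) with hKdef
  have hκK : κ ≤ K := by
    conv_lhs => rw [← ENNReal.ofReal_toReal hκ.ne]
    exact ENNReal.ofReal_le_ofReal (by linarith)
  have h1P : (1:ℝ≥0∞) ≤ P := by
    rw [hPdef, ← ENNReal.ofReal_one]
    exact ENNReal.ofReal_le_ofReal h2p1
  set F := funcF N Ψ u
  set Fg := funcFgrad N Ψ u
  have hbig : T1 + T2 ≤ 3 * (P * K * (F + Fg)) := by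
    have b1 : T1 ≤ P * K * (F + Fg) := by
      calc T1 ≤ Fg * κ := hT1
        _ ≤ Fg * (P * K) := mul_le_mul_right (hκK.trans (le_mul_of_one_le_left zero_le h1P)) _
        _ = P * K * Fg := mul_comm _ _
        _ ≤ P * K * (F + Fg) := mul_le_mul_right le_add_self _
    have b2 : P * F * κf ≤ P * K * (F + Fg) := by
      calc P * F * κf ≤ P * F * K := mul_le_mul_right (hfar.trans hκK) _
        _ = P * K * F := by ring
        _ ≤ P * K * (F + Fg) := mul_le_mul_right (self_le_add_right F Fg) _
    calc T1 + T2 ≤ P * K * (F + Fg) + (P * F * κf + P * F * κf) :=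
          add_le_add b1 hT2
      _ ≤ P * K * (F + Fg) + (P * K * (F + Fg) + P * K * (F + Fg)) :=
          add_le_add le_rfl (add_le_add b2 b2)
      _ = 3 * (P * K * (F + Fg)) := by ring
  have hhalf : funcE N Ψ J u ≤ T1 + T2 := by
    rw [hEeq]
    calc (1/2 : ℝ≥0∞) * (T1 + T2) = (T1 + T2) / 2 := by
          rw [one_div, ENNReal.div_eq_inv_mul]
      _ ≤ T1 + T2 := ENNReal.half_le_self
  have hcoef : ENNReal.ofReal (3 * 2 ^ p * (κ.toReal + 1)) = 3 * P * K := by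
    rw [ENNReal.ofReal_mul (by positivity), ENNReal.ofReal_mul (by norm_num : (0:ℝ) ≤ 3)]
    rw [ENNReal.ofReal_ofNat]
  calc funcE N Ψ J u ≤ T1 + T2 := hhalf
    _ ≤ 3 * (P * K * (F + Fg)) := hbig
    _ = 3 * P * K * (F + Fg) := by ring
    _ = ENNReal.ofReal (3 * 2 ^ p * (κ.toReal + 1)) * (F + Fg) := by rw [hcoef]
end
end

section
/- Let ψ : ℝ → ℝ be a continuous, nondecreasing, odd function, differentiable on ℝ∖{0}, with ψ(s) > 0 for s > 0 and satisfying sψ'(s) ≥ ψ(s) for every s ≠ 0, and let Ψ(t) = ∫₀^t ψ(s) ds. Then for all a, b ∈ ℝ: (ψ(a) − ψ(b))(a − b) ≥ 4 Ψ((a − b)/2). -/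
open MeasureTheory Set Filter

noncomputable section

private lemma psi_zero (ψ : ℝ → ℝ) (hodd : ∀ s, ψ (-s) = -ψ s) : ψ 0 = 0 := by
  have := hodd 0; simp at this; linarith

private lemma ratio_mono (ψ : ℝ → ℝ) (hcont : Continuous ψ)
    (hdiff : ∀ s : ℝ, s ≠ 0 → DifferentiableAt ℝ ψ s)
    (hineq : ∀ s : ℝ, s ≠ 0 → ψ s ≤ s * deriv ψ s) :
    ∀ x y : ℝ, 0 < x → x ≤ y → ψ x / x ≤ ψ y / y := by
  intro x y hx hxy
  have hmono : MonotoneOn (fun s => ψ s / s) (Ici x) := by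
    apply monotoneOn_of_deriv_nonneg (convex_Ici x)
    · exact (hcont.continuousOn).div continuousOn_id
        (fun s hs => by have : (0:ℝ) < s := lt_of_lt_of_le hx hs; exact this.ne')
    · rw [interior_Ici]
      intro s hs
      have hs0 : (0:ℝ) < s := lt_trans hx hs
      exact ((hdiff s hs0.ne').div (differentiableAt_fun_id) hs0.ne').differentiableWithinAt
    · rw [interior_Ici]
      intro s hs
      have hs0 : (0:ℝ) < s := lt_trans hx hs
      have hd : HasDerivAt (fun t => ψ t / t) ((deriv ψ s * s - ψ s * 1) / s ^ 2) s :=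
        ((hdiff s hs0.ne').hasDerivAt).div (hasDerivAt_id s) hs0.ne'
      rw [hd.deriv]
      have := hineq s hs0.ne'
      have h2 : (0:ℝ) < s ^ 2 := by positivity
      apply div_nonneg _ h2.le
      nlinarith
  exact hmono (self_mem_Ici) hxy (by exact hxy)

private lemma superadd (ψ : ℝ → ℝ) (hcont : Continuous ψ)
    (hdiff : ∀ s : ℝ, s ≠ 0 → DifferentiableAt ℝ ψ s)
    (hineq : ∀ s : ℝ, s ≠ 0 → ψ s ≤ s * deriv ψ s) :
    ∀ x y : ℝ, 0 < x → 0 < y → ψ x + ψ y ≤ ψ (x + y) := by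
  intro x y hx hy
  have hxy : (0:ℝ) < x + y := by linarith
  have h1 := ratio_mono ψ hcont hdiff hineq x (x+y) hx (by linarith)
  have h2 := ratio_mono ψ hcont hdiff hineq y (x+y) hy (by linarith)
  rw [div_le_div_iff₀ hx hxy] at h1
  rw [div_le_div_iff₀ hy hxy] at h2
  nlinarith

private lemma key_step (ψ : ℝ → ℝ) (hcont : Continuous ψ) (hmono : Monotone ψ)
    (hodd : ∀ s, ψ (-s) = -ψ s)
    (hdiff : ∀ s : ℝ, s ≠ 0 → DifferentiableAt ℝ ψ s)
    (hineq : ∀ s : ℝ, s ≠ 0 → ψ s ≤ s * deriv ψ s)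
    (a b : ℝ) (hab : b ≤ a) : ψ ((a - b) / 2) ≤ ψ a - ψ b := by
  set h := (a - b) / 2 with hh
  have hz := psi_zero ψ hodd
  rcases eq_or_lt_of_le hab with heq | hlt
  · have : h = 0 := by rw [hh, ← heq]; ring
    rw [this, hz, ← heq]; linarith
  · have hpos : 0 < h := by rw [hh]; linarith
    have ha2 : a = b + 2 * h := by rw [hh]; ring
    have hψnn : ∀ s : ℝ, 0 ≤ s → 0 ≤ ψ s := fun s hs => hz ▸ hmono hs
    have hψnp : ∀ s : ℝ, s ≤ 0 → ψ s ≤ 0 := fun s hs => hz ▸ hmono hs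
    rcases lt_trichotomy b 0 with hb | hb | hb
    · rcases lt_trichotomy a 0 with ha | ha | ha
      · -- a < 0 : use -a > 0, -b = -a + 2h
        have hsup := superadd ψ hcont hdiff hineq (-a) (2*h) (by linarith) (by linarith)
        have hmon2 : ψ h ≤ ψ (2*h) := hmono (by linarith)
        have : -a + 2*h = -b := by rw [ha2]; ring
        rw [this] at hsup
        rw [hodd a, hodd b] at *
        linarith [hsup, hmon2]
      · -- a = 0
        have : -b = 2*h := by rw [ha2] at ha; linarith
        have hmon2 : ψ h ≤ ψ (2*h) := hmono (by linarith)
        have hb' : ψ (-b) = -ψ b := hodd b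
        rw [this] at hb'
        rw [ha, hz]
        linarith [hψnn (2*h) (by linarith)]
      · -- b < 0 < a
        rcases le_or_gt h a with hha | hha
        · have := hmono hha
          have := hψnp b hb.le
          linarith
        · have hbh : h ≤ -b := by rw [ha2] at hha; linarith
          have h1 : ψ h ≤ ψ (-b) := hmono hbh
          rw [hodd b] at h1
          have := hψnn a ha.le
          linarith
    · -- b = 0
      subst hb
      have : a = 2*h := by linarith [ha2]
      rw [this, hz]
      have : ψ h ≤ ψ (2*h) := hmono (by linarith)
      linarith
    · -- 0 < b
      have hsup := superadd ψ hcont hdiff hineq b (2*h) hb (by linarith)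
      have hmon2 : ψ h ≤ ψ (2*h) := hmono (by linarith)
      rw [← ha2] at hsup
      linarith

private lemma Psi_le (ψ : ℝ → ℝ) (hcont : Continuous ψ) (hodd : ∀ s, ψ (-s) = -ψ s)
    (hdiff : ∀ s : ℝ, s ≠ 0 → DifferentiableAt ℝ ψ s)
    (hineq : ∀ s : ℝ, s ≠ 0 → ψ s ≤ s * deriv ψ s)
    (Ψ : ℝ → ℝ) (hΨ : ∀ t, Ψ t = ∫ s in (0:ℝ)..t, ψ s) :
    ∀ t : ℝ, 0 ≤ t → 2 * Ψ t ≤ t * ψ t := by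
  have hΨfun : Ψ = fun t => ∫ s in (0:ℝ)..t, ψ s := funext hΨ
  have hΨd : ∀ t : ℝ, HasDerivAt Ψ (ψ t) t := by
    intro t; rw [hΨfun]; exact (hcont.integral_hasStrictDerivAt 0 t).hasDerivAt
  have hz := psi_zero ψ hodd
  intro t ht
  have hF : MonotoneOn (fun s => s * ψ s - 2 * Ψ s) (Ici 0) := by
    apply monotoneOn_of_deriv_nonneg (convex_Ici 0)
    · exact ((continuous_id.mul hcont).sub
        (continuous_const.mul (Differentiable.continuous (fun u => (hΨd u).differentiableAt)))).continuousOn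
    · rw [interior_Ici]
      intro s hs
      exact (((differentiableAt_fun_id).mul (hdiff s (ne_of_gt hs))).sub
        ((differentiableAt_const 2).mul (hΨd s).differentiableAt)).differentiableWithinAt
    · rw [interior_Ici]
      intro s hs
      have hd : HasDerivAt (fun u => u * ψ u - 2 * Ψ u)
          (1 * ψ s + s * deriv ψ s - 2 * ψ s) s := by
        have h1 : HasDerivAt (fun u => u * ψ u) (1 * ψ s + s * deriv ψ s) s :=
          (hasDerivAt_id s).mul ((hdiff s (ne_of_gt hs)).hasDerivAt)
        have h2 : HasDerivAt (fun u => 2 * Ψ u) (2 * ψ s) s := (hΨd s).const_mul 2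
        exact h1.sub h2
      rw [hd.deriv]
      have := hineq s (ne_of_gt hs)
      linarith
  have h0 : (fun s => s * ψ s - 2 * Ψ s) 0 = 0 := by
    simp [hΨ 0, hz]
  have := hF (self_mem_Ici) (mem_Ici.mpr ht) ht
  rw [h0] at this
  simpa using this

private lemma Psi_even (ψ : ℝ → ℝ) (hcont : Continuous ψ) (hodd : ∀ s, ψ (-s) = -ψ s)
    (Ψ : ℝ → ℝ) (hΨ : ∀ t, Ψ t = ∫ s in (0:ℝ)..t, ψ s) : ∀ t, Ψ (-t) = Ψ t := by
  intro t
  rw [hΨ, hΨ]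
  have h1 : (∫ s in (0:ℝ)..t, ψ (-s)) = ∫ s in (-t)..(-(0:ℝ)), ψ s :=
    intervalIntegral.integral_comp_neg ψ
  simp only [hodd, intervalIntegral.integral_neg, neg_zero] at h1
  have h2 := intervalIntegral.integral_symm (a := (0:ℝ)) (b := -t) (f := ψ) (μ := volume)
  linarith [h1, h2]

theorem stmt6 (ψ : ℝ → ℝ) (hcont : Continuous ψ) (hmono : Monotone ψ)
    (hodd : ∀ s, ψ (-s) = -ψ s)
    (hdiff : ∀ s : ℝ, s ≠ 0 → DifferentiableAt ℝ ψ s)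
    (hpos : ∀ s : ℝ, 0 < s → 0 < ψ s)
    (hineq : ∀ s : ℝ, s ≠ 0 → ψ s ≤ s * deriv ψ s)
    (Ψ : ℝ → ℝ) (hΨ : ∀ t, Ψ t = ∫ s in (0:ℝ)..t, ψ s)
    (a b : ℝ) :
    4 * Ψ ((a - b) / 2) ≤ (ψ a - ψ b) * (a - b) := by
  have main : ∀ x y : ℝ, y ≤ x → 4 * Ψ ((x - y) / 2) ≤ (ψ x - ψ y) * (x - y) := by
    intro x y hxy
    set h := (x - y) / 2 with hh
    have hpos : 0 ≤ h := by rw [hh]; linarith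
    have h1 := Psi_le ψ hcont hodd hdiff hineq Ψ hΨ h hpos
    have h2 := key_step ψ hcont hmono hodd hdiff hineq x y hxy
    rw [← hh] at h2
    have h3 : h * ψ h ≤ h * (ψ x - ψ y) := mul_le_mul_of_nonneg_left h2 hpos
    have hxyh : x - y = 2 * h := by rw [hh]; ring
    rw [hxyh]
    nlinarith
  rcases le_total b a with hab | hab
  · exact main a b hab
  · have he : Ψ ((a - b)/2) = Ψ ((b - a)/2) := by
      have := Psi_even ψ hcont hodd Ψ hΨ ((b - a)/2)
      rw [show -((b-a)/2) = (a-b)/2 by ring] at this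
      exact this
    have := main b a hab
    rw [he]
    nlinarith [this]
end
end

section
/- Let ψ : ℝ → ℝ be a continuous, nondecreasing, odd function which is concave and continuously differentiable on (0,∞), with ψ' nonincreasing on (0,∞), and let Ψ(t) = ∫₀^t ψ(s) ds. Then for all a, b ∈ ℝ with |a| + |b| > 0: (ψ(a) − ψ(b))(a − b) ≥ ψ'(|a| + |b|)(a − b)². -/
open MeasureTheory Set Filter

noncomputable section

theorem stmt7 (ψ : ℝ → ℝ) (hcont : Continuous ψ) (hmono : Monotone ψ)
    (hodd : ∀ s, ψ (-s) = -ψ s)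
    (hconc : ConcaveOn ℝ (Set.Ioi 0) ψ)
    (hdiff : ∀ s ∈ Set.Ioi (0:ℝ), DifferentiableAt ℝ ψ s)
    (hderivcont : ContinuousOn (deriv ψ) (Set.Ioi 0))
    (hanti : AntitoneOn (deriv ψ) (Set.Ioi 0))
    (Ψ : ℝ → ℝ) (hΨ : ∀ t, Ψ t = ∫ s in (0:ℝ)..t, ψ s)
    (a b : ℝ) (hab : 0 < |a| + |b|) :
    deriv ψ (|a| + |b|) * (a - b) ^ 2 ≤ (ψ a - ψ b) * (a - b) := by
  set c := |a| + |b| with hc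
  set D := deriv ψ c with hD
  have ψ0 : ψ 0 = 0 := by have h := hodd 0; simp at h; linarith
  -- positive-x version via MVT
  have Lpos : ∀ x y : ℝ, 0 < x → x < y → y ≤ c → D * (y - x) ≤ ψ y - ψ x := by
    intro x y hx hxy hyc
    obtain ⟨ξ, hξ, hslope⟩ := exists_deriv_eq_slope ψ hxy (hcont.continuousOn)
      (fun s hs => (hdiff s (by exact lt_trans hx hs.1)).differentiableWithinAt)
    have hξpos : (0:ℝ) < ξ := lt_trans hx hξ.1
    have hDle : D ≤ deriv ψ ξ := hanti hξpos hab (le_trans (le_of_lt hξ.2) hyc)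
    have hyx : (0:ℝ) ≤ y - x := by linarith
    have := mul_le_mul_of_nonneg_right hDle hyx
    calc D * (y - x) ≤ deriv ψ ξ * (y - x) := this
      _ = ψ y - ψ x := by rw [hslope, div_mul_cancel₀ _ (by linarith : y - x ≠ 0)]
  -- extend to x = 0 by continuity
  have L : ∀ x y : ℝ, 0 ≤ x → x < y → y ≤ c → D * (y - x) ≤ ψ y - ψ x := by
    intro x y hx hxy hyc
    rcases eq_or_lt_of_le hx with heq | hx'
    · subst heq
      have ht : Filter.Tendsto (fun x => ψ y - ψ x - D * (y - x)) (nhdsWithin 0 (Set.Ioi 0))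
          (nhds (ψ y - ψ 0 - D * (y - 0))) := by
        apply Filter.Tendsto.mono_left _ nhdsWithin_le_nhds
        exact (Continuous.tendsto (by fun_prop) 0)
      have hnn : ∀ᶠ x in nhdsWithin (0:ℝ) (Set.Ioi 0), 0 ≤ ψ y - ψ x - D * (y - x) := by
        have h1 : ∀ᶠ x in nhdsWithin (0:ℝ) (Set.Ioi 0), x < y :=
          Filter.Tendsto.eventually_lt_const hxy (Filter.Tendsto.mono_left
            (Continuous.tendsto continuous_id 0) nhdsWithin_le_nhds)
        have h2 : ∀ᶠ x in nhdsWithin (0:ℝ) (Set.Ioi 0), x ∈ Set.Ioi (0:ℝ) :=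
          eventually_mem_nhdsWithin
        filter_upwards [h1, h2] with x hxy' hx0
        have := Lpos x y hx0 hxy' hyc
        linarith
      have := ge_of_tendsto ht hnn
      linarith
    · exact Lpos x y hx' hxy hyc
  -- key: for q < p, D * (p - q) ≤ ψ p - ψ q
  have key : ∀ p q : ℝ, q < p → |p| + |q| = c → D * (p - q) ≤ ψ p - ψ q := by
    intro p q hqp habs
    rcases le_or_gt 0 q with hq | hq
    · have hp : p ≤ c := by
        rw [← habs]
        have : |p| = p := abs_of_pos (lt_of_le_of_lt hq hqp)
        have : p ≤ |p| := le_abs_self p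
        linarith [abs_nonneg q]
      have := L q p hq hqp hp
      linarith
    · rcases le_or_gt p 0 with hp | hp
      · have h1 : (0:ℝ) ≤ -p := by linarith
        have h2 : -p < -q := by linarith
        have h3 : -q ≤ c := by
          rw [← habs]
          have : -q ≤ |q| := neg_le_abs q
          linarith [abs_nonneg p]
        have := L (-p) (-q) h1 h2 h3
        have e1 : ψ (-q) = -ψ q := hodd q
        have e2 : ψ (-p) = -ψ p := hodd p
        rw [e1, e2] at this
        linarith
      · have hpc : p ≤ c := by
          rw [← habs]
          have : p ≤ |p| := le_abs_self p
          linarith [abs_nonneg q]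
        have hqc : -q ≤ c := by
          rw [← habs]
          have : -q ≤ |q| := neg_le_abs q
          linarith [abs_nonneg p]
        have i1 := L 0 p le_rfl hp hpc
        have i2 := L 0 (-q) le_rfl (by linarith) hqc
        rw [ψ0] at i1 i2
        have e1 : ψ (-q) = -ψ q := hodd q
        rw [e1] at i2
        linarith
  rcases lt_trichotomy a b with h | h | h
  · have := key b a h (by rw [add_comm])
    nlinarith [this]
  · subst h; simp
  · have := key a b h rfl
    nlinarith [this]
end
end

section
/- Let 1 < p < 2 and let ψ : ℝ → ℝ be a continuous, nondecreasing, odd function, differentiable on ℝ∖{0}, satisfying c₁|s|^{p−2} ≤ ψ'(s) ≤ c₂|s|^{p−2} for all s ≠ 0, where c₂ ≥ c₁ > 0; let Ψ(t) = ∫₀^t ψ(s) ds. Then there exists a constant c > 0, depending only on p, c₁, c₂, such that for all a, b ∈ ℝ not both zero: (ψ(a) − ψ(b))(a − b) ≥ c · Ψ(a − b)^{2/p} / (Ψ(a) + Ψ(b))^{(2−p)/p}. -/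
open MeasureTheory Set Filter

noncomputable section

private lemma rpow_subadd_aux {x y q : ℝ} (hx : 0 ≤ x) (hy : 0 ≤ y) (hq0 : 0 ≤ q) (hq1 : q ≤ 1) :
    (x + y) ^ q ≤ x ^ q + y ^ q := by
  have h := NNReal.rpow_add_le_add_rpow x.toNNReal y.toNNReal hq0 hq1
  have h2 : ((x.toNNReal + y.toNNReal : NNReal) : ℝ) = x + y := by
    simp [Real.coe_toNNReal, hx, hy]
  calc (x + y) ^ q = ((x.toNNReal + y.toNNReal : NNReal) : ℝ) ^ q := by rw [h2]
    _ = (((x.toNNReal + y.toNNReal) ^ q : NNReal) : ℝ) := by rw [NNReal.coe_rpow]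
    _ ≤ ((x.toNNReal ^ q + y.toNNReal ^ q : NNReal) : ℝ) := by exact_mod_cast h
    _ = x ^ q + y ^ q := by
        push_cast [NNReal.coe_rpow, Real.coe_toNNReal x hx, Real.coe_toNNReal y hy]
        ring

private lemma ae_ne_zero : ∀ᵐ x : ℝ, x ≠ 0 := by
  refine (MeasureTheory.ae_iff).mpr ?_
  simp only [ne_eq, not_not]
  have : {a : ℝ | a = 0} = {0} := by ext; simp
  rw [this]
  exact measure_singleton 0

theorem stmt8 (p c₁ c₂ : ℝ) (hp1 : 1 < p) (hp2 : p < 2) (hc₁ : 0 < c₁) (hc₁₂ : c₁ ≤ c₂)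
    (ψ : ℝ → ℝ) (hcont : Continuous ψ) (hmono : Monotone ψ)
    (hodd : ∀ s, ψ (-s) = -ψ s)
    (hdiff : ∀ s : ℝ, s ≠ 0 → DifferentiableAt ℝ ψ s)
    (hbound : ∀ s : ℝ, s ≠ 0 →
      c₁ * |s| ^ (p - 2) ≤ deriv ψ s ∧ deriv ψ s ≤ c₂ * |s| ^ (p - 2))
    (Ψ : ℝ → ℝ) (hΨ : ∀ t, Ψ t = ∫ s in (0:ℝ)..t, ψ s) :
    ∃ c : ℝ, 0 < c ∧ ∀ a b : ℝ, ¬(a = 0 ∧ b = 0) →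
      c * Ψ (a - b) ^ (2 / p) / (Ψ a + Ψ b) ^ ((2 - p) / p) ≤ (ψ a - ψ b) * (a - b) := by
  have hp0 : 0 < p := by linarith
  have hpm1 : 0 < p - 1 := by linarith
  have hc₂ : 0 < c₂ := lt_of_lt_of_le hc₁ hc₁₂
  have hψ0 : ψ 0 = 0 := by have := hodd 0; simp at this; linarith
  -- integrability of deriv ψ on [b,a] for 0 ≤ b ≤ a
  have hint : ∀ a b : ℝ, 0 ≤ b → b ≤ a → IntervalIntegrable (deriv ψ) volume b a := by
    intro a b hb hab
    apply IntervalIntegrable.mono_fun'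
      ((intervalIntegral.intervalIntegrable_rpow' (r := p - 2) (by linarith)).const_mul c₂)
      ((measurable_deriv ψ).aestronglyMeasurable)
    rw [Set.uIoc_of_le hab]
    filter_upwards [MeasureTheory.ae_restrict_mem measurableSet_Ioc] with x hx
    have hx0 : 0 < x := lt_of_le_of_lt hb hx.1
    obtain ⟨h1, h2⟩ := hbound x hx0.ne'
    rw [abs_of_pos hx0] at h1 h2
    rw [Real.norm_eq_abs, abs_of_nonneg (le_trans (by positivity) h1)]
    exact h2
  have hftc : ∀ a b : ℝ, 0 ≤ b → b ≤ a → ∫ x in b..a, deriv ψ x = ψ a - ψ b := by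
    intro a b hb hab
    exact intervalIntegral.integral_eq_sub_of_hasDeriv_right_of_le hab hcont.continuousOn
      (fun x hx => ((hdiff x (lt_of_le_of_lt hb hx.1).ne').hasDerivAt).hasDerivWithinAt)
      (hint a b hb hab)
  have key1 : ∀ a b : ℝ, 0 ≤ b → b < a → c₁ * ((a - b) * a ^ (p - 2)) ≤ ψ a - ψ b := by
    intro a b hb hab
    have ha : 0 < a := lt_of_le_of_lt hb hab
    rw [← hftc a b hb hab.le]
    have hconst : (∫ _x in b..a, c₁ * a ^ (p - 2)) = (a - b) * (c₁ * a ^ (p - 2)) := by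
      rw [intervalIntegral.integral_const]; simp [smul_eq_mul]
    have hmono2 : (∫ _x in b..a, c₁ * a ^ (p - 2)) ≤ ∫ x in b..a, deriv ψ x := by
      apply intervalIntegral.integral_mono_ae_restrict hab.le intervalIntegrable_const
        (hint a b hb hab.le)
      filter_upwards [ae_restrict_of_ae ae_ne_zero,
        MeasureTheory.ae_restrict_mem measurableSet_Icc] with x hx0 hxm
      have hx0' : 0 < x := lt_of_le_of_ne (le_trans hb hxm.1) (Ne.symm hx0)
      have hbx := (hbound x hx0).1
      rw [abs_of_pos hx0'] at hbx
      calc c₁ * a ^ (p - 2) ≤ c₁ * x ^ (p - 2) :=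
            mul_le_mul_of_nonneg_left
              (Real.rpow_le_rpow_of_nonpos hx0' hxm.2 (by linarith)) hc₁.le
        _ ≤ deriv ψ x := hbx
    calc c₁ * ((a - b) * a ^ (p - 2)) = (a - b) * (c₁ * a ^ (p - 2)) := by ring
      _ = ∫ _x in b..a, c₁ * a ^ (p - 2) := hconst.symm
      _ ≤ ∫ x in b..a, deriv ψ x := hmono2
  have key1' : ∀ a : ℝ, 0 ≤ a → c₁ * a ^ (p - 1) ≤ ψ a := by
    intro a ha
    rcases ha.eq_or_lt with rfl | ha'
    · simp [hψ0, Real.zero_rpow (show p - 1 ≠ 0 by linarith)]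
    · have h := key1 a 0 le_rfl ha'
      rw [hψ0, sub_zero, sub_zero] at h
      calc c₁ * a ^ (p - 1) = c₁ * (a * a ^ (p - 2)) := by
            rw [show p - 1 = 1 + (p - 2) by ring, Real.rpow_add ha', Real.rpow_one]
        _ ≤ ψ a := h
  have keyub : ∀ a : ℝ, 0 ≤ a → ψ a ≤ c₂ / (p - 1) * a ^ (p - 1) := by
    intro a ha
    rcases ha.eq_or_lt with rfl | ha'
    · simp [hψ0, Real.zero_rpow (show p - 1 ≠ 0 by linarith)]
    · have hfa := hftc a 0 le_rfl ha'.le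
      have hmono2 : (∫ x in (0:ℝ)..a, deriv ψ x) ≤ ∫ x in (0:ℝ)..a, c₂ * x ^ (p - 2) := by
        apply intervalIntegral.integral_mono_ae_restrict ha'.le (hint a 0 le_rfl ha'.le)
          ((intervalIntegral.intervalIntegrable_rpow' (by linarith)).const_mul c₂)
        filter_upwards [ae_restrict_of_ae ae_ne_zero,
          MeasureTheory.ae_restrict_mem measurableSet_Icc] with x hx0 hxm
        have hx0' : 0 < x := lt_of_le_of_ne hxm.1 (Ne.symm hx0)
        have h2 := (hbound x hx0'.ne').2
        rwa [abs_of_pos hx0'] at h2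
      have hval : (∫ x in (0:ℝ)..a, c₂ * x ^ (p - 2)) = c₂ / (p - 1) * a ^ (p - 1) := by
        rw [intervalIntegral.integral_const_mul, integral_rpow (Or.inl (by linarith))]
        rw [show p - 2 + 1 = p - 1 by ring, Real.zero_rpow (show p - 1 ≠ 0 by linarith),
          sub_zero]
        ring
      rw [hψ0, sub_zero] at hfa
      rw [← hfa, ← hval] at *
      linarith [hmono2]
  have hΨeven : ∀ t : ℝ, Ψ (-t) = Ψ t := by
    intro t
    have h1 : (∫ x in (0:ℝ)..t, ψ (-x)) = ∫ x in (-t)..(0:ℝ), ψ x := by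
      simpa using intervalIntegral.integral_comp_neg (f := ψ) (a := 0) (b := t)
    have h2 : (∫ x in (0:ℝ)..t, ψ (-x)) = -∫ x in (0:ℝ)..t, ψ x := by
      simp_rw [hodd]
      exact intervalIntegral.integral_neg
    have h3 : (∫ x in (-t)..(0:ℝ), ψ x) = -∫ x in (0:ℝ)..(-t), ψ x :=
      intervalIntegral.integral_symm 0 (-t)
    rw [hΨ, hΨ]
    have := h1.symm.trans h2
    rw [h3] at this
    linarith
  have hΨub0 : ∀ t : ℝ, 0 ≤ t → Ψ t ≤ c₂ / ((p - 1) * p) * t ^ p := by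
    intro t ht
    rw [hΨ]
    have hmono2 : (∫ x in (0:ℝ)..t, ψ x) ≤ ∫ x in (0:ℝ)..t, c₂ / (p - 1) * x ^ (p - 1) := by
      apply intervalIntegral.integral_mono_on ht (hcont.intervalIntegrable 0 t)
        ((intervalIntegral.intervalIntegrable_rpow' (by linarith)).const_mul _)
      intro x hx
      exact keyub x hx.1
    have hval : (∫ x in (0:ℝ)..t, c₂ / (p - 1) * x ^ (p - 1)) = c₂ / ((p - 1) * p) * t ^ p := by
      rw [intervalIntegral.integral_const_mul, integral_rpow (Or.inl (by linarith))]
      rw [show p - 1 + 1 = p by ring, Real.zero_rpow hp0.ne', sub_zero]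
      field_simp
    linarith
  have hΨlb0 : ∀ t : ℝ, 0 ≤ t → c₁ / p * t ^ p ≤ Ψ t := by
    intro t ht
    rw [hΨ]
    have hmono2 : (∫ x in (0:ℝ)..t, c₁ * x ^ (p - 1)) ≤ ∫ x in (0:ℝ)..t, ψ x := by
      apply intervalIntegral.integral_mono_on ht
        ((intervalIntegral.intervalIntegrable_rpow' (by linarith)).const_mul _)
        (hcont.intervalIntegrable 0 t)
      intro x hx
      exact key1' x hx.1
    have hval : (∫ x in (0:ℝ)..t, c₁ * x ^ (p - 1)) = c₁ / p * t ^ p := by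
      rw [intervalIntegral.integral_const_mul, integral_rpow (Or.inl (by linarith))]
      rw [show p - 1 + 1 = p by ring, Real.zero_rpow hp0.ne', sub_zero]
      ring
    linarith
  have hΨub : ∀ t : ℝ, Ψ t ≤ c₂ / ((p - 1) * p) * |t| ^ p := by
    intro t
    rcases le_or_gt 0 t with ht | ht
    · rw [abs_of_nonneg ht]; exact hΨub0 t ht
    · rw [abs_of_neg ht, ← hΨeven t]; exact hΨub0 (-t) (by linarith)
  have hΨlb : ∀ t : ℝ, c₁ / p * |t| ^ p ≤ Ψ t := by
    intro t
    rcases le_or_gt 0 t with ht | ht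
    · rw [abs_of_nonneg ht]; exact hΨlb0 t ht
    · rw [abs_of_neg ht, ← hΨeven t]; exact hΨlb0 (-t) (by linarith)
  have hΨnn : ∀ t : ℝ, 0 ≤ Ψ t := fun t => le_trans (by positivity) (hΨlb t)
  have keyD : ∀ a b : ℝ, b < a → c₁ * ((a - b) * (|a| + |b|) ^ (p - 2)) ≤ ψ a - ψ b := by
    intro a b hab
    rcases le_or_gt 0 b with hb | hb
    · have ha : 0 < a := lt_of_le_of_lt hb hab
      have h := key1 a b hb hab
      have hS : (|a| + |b|) ^ (p - 2) ≤ a ^ (p - 2) := by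
        apply Real.rpow_le_rpow_of_nonpos ha _ (by linarith)
        rw [abs_of_pos ha, abs_of_nonneg hb]; linarith
      calc c₁ * ((a - b) * (|a| + |b|) ^ (p - 2)) ≤ c₁ * ((a - b) * a ^ (p - 2)) := by
            apply mul_le_mul_of_nonneg_left
              (mul_le_mul_of_nonneg_left hS (by linarith)) hc₁.le
        _ ≤ ψ a - ψ b := h
    · rcases le_or_gt a 0 with ha | ha
      · -- b < a ≤ 0
        have h := key1 (-b) (-a) (by linarith) (by linarith)
        rw [hodd, hodd] at h
        have hS : (|a| + |b|) ^ (p - 2) ≤ (-b) ^ (p - 2) := by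
          apply Real.rpow_le_rpow_of_nonpos (by linarith) _ (by linarith)
          rw [abs_of_nonpos ha, abs_of_neg hb]; linarith
        calc c₁ * ((a - b) * (|a| + |b|) ^ (p - 2)) ≤ c₁ * ((a - b) * (-b) ^ (p - 2)) := by
              apply mul_le_mul_of_nonneg_left
                (mul_le_mul_of_nonneg_left hS (by linarith)) hc₁.le
          _ = c₁ * ((-b - -a) * (-b) ^ (p - 2)) := by ring_nf
          _ ≤ -ψ b - -ψ a := h
          _ = ψ a - ψ b := by ring
      · -- b < 0 < a
        have h1 := key1' a ha.le
        have h2 := key1' (-b) (by linarith)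
        rw [hodd] at h2
        have hsub : (a + -b) ^ (p - 1) ≤ a ^ (p - 1) + (-b) ^ (p - 1) :=
          rpow_subadd_aux ha.le (by linarith) (by linarith) (by linarith)
        have habs : |a| + |b| = a - b := by rw [abs_of_pos ha, abs_of_neg hb]; ring
        rw [habs]
        have hx : (a - b) ^ (p - 1) = (a - b) * (a - b) ^ (p - 2) := by
          rw [show p - 1 = 1 + (p - 2) by ring, Real.rpow_add (by linarith), Real.rpow_one]
        calc c₁ * ((a - b) * (a - b) ^ (p - 2)) = c₁ * (a - b) ^ (p - 1) := by rw [← hx]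
          _ = c₁ * (a + -b) ^ (p - 1) := by rw [sub_eq_add_neg a b]
          _ ≤ c₁ * (a ^ (p - 1) + (-b) ^ (p - 1)) := mul_le_mul_of_nonneg_left hsub hc₁.le
          _ ≤ ψ a - ψ b := by rw [mul_add]; linarith
  -- constants
  set A : ℝ := (c₂ / ((p - 1) * p)) ^ (2 / p) with hA
  set B : ℝ := (c₁ / p * (2:ℝ) ^ (-p)) ^ ((2 - p) / p) with hB
  have hb1 : (0:ℝ) < c₁ / p * (2:ℝ) ^ (-p) :=
    mul_pos (div_pos hc₁ hp0) (Real.rpow_pos_of_pos two_pos _)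
  have hb2 : (0:ℝ) < c₂ / ((p - 1) * p) := div_pos hc₂ (mul_pos hpm1 hp0)
  have hApos : 0 < A := Real.rpow_pos_of_pos hb2 _
  have hBpos : 0 < B := Real.rpow_pos_of_pos hb1 _
  have hsum : ∀ a b : ℝ, c₁ / p * (2:ℝ) ^ (-p) * (|a| + |b|) ^ p ≤ Ψ a + Ψ b := by
    intro a b
    have h1 := hΨlb a
    have h2 := hΨlb b
    have hM : |a| + |b| ≤ 2 * max |a| |b| := by
      have := le_max_left |a| |b|; have := le_max_right |a| |b|; linarith
    have h3 : (|a| + |b|) ^ p ≤ 2 ^ p * (|a| ^ p + |b| ^ p) := by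
      calc (|a| + |b|) ^ p ≤ (2 * max |a| |b|) ^ p :=
            Real.rpow_le_rpow (by positivity) hM hp0.le
        _ = 2 ^ p * (max |a| |b|) ^ p := Real.mul_rpow (by norm_num) (le_max_of_le_left (abs_nonneg a))
        _ ≤ 2 ^ p * (|a| ^ p + |b| ^ p) := by
            apply mul_le_mul_of_nonneg_left _ (Real.rpow_nonneg (by norm_num) p)
            rcases max_cases |a| |b| with ⟨hm, _⟩ | ⟨hm, _⟩ <;> rw [hm]
            · nlinarith [Real.rpow_nonneg (abs_nonneg b) p]
            · nlinarith [Real.rpow_nonneg (abs_nonneg a) p]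
    have h2p : (2:ℝ) ^ (-p) * 2 ^ p = 1 := by
      rw [← Real.rpow_add two_pos]; simp
    calc c₁ / p * (2:ℝ) ^ (-p) * (|a| + |b|) ^ p
        ≤ c₁ / p * (2:ℝ) ^ (-p) * (2 ^ p * (|a| ^ p + |b| ^ p)) :=
          mul_le_mul_of_nonneg_left h3 hb1.le
      _ = c₁ / p * (((2:ℝ) ^ (-p) * 2 ^ p) * (|a| ^ p + |b| ^ p)) := by ring
      _ = c₁ / p * (|a| ^ p + |b| ^ p) := by rw [h2p, one_mul]
      _ ≤ Ψ a + Ψ b := by rw [mul_add]; exact add_le_add h1 h2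
  refine ⟨c₁ * B / A, div_pos (mul_pos hc₁ hBpos) hApos, ?_⟩
  have main : ∀ a b : ℝ, ¬(a = 0 ∧ b = 0) → b < a →
      c₁ * B / A * Ψ (a - b) ^ (2 / p) / (Ψ a + Ψ b) ^ ((2 - p) / p) ≤ (ψ a - ψ b) * (a - b) := by
    intro a b hab0 hlt
    have hd : 0 < a - b := sub_pos.mpr hlt
    have hS : 0 < |a| + |b| := by
      rcases not_and_or.mp hab0 with h | h
      · linarith [abs_pos.mpr h, abs_nonneg b]
      · linarith [abs_pos.mpr h, abs_nonneg a]
    set S : ℝ := |a| + |b| with hSdef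
    have hCpos : 0 < c₁ * B / A := div_pos (mul_pos hc₁ hBpos) hApos
    have hx2 : (a - b) ^ ((2:ℝ)) = (a - b) * (a - b) := by
      rw [show ((2:ℝ)) = ((2:ℕ):ℝ) by norm_num, Real.rpow_natCast]; ring
    -- numerator bound
    have hnum : Ψ (a - b) ^ (2 / p) ≤ A * (a - b) ^ ((2:ℝ)) := by
      have h1 : Ψ (a - b) ≤ c₂ / ((p - 1) * p) * (a - b) ^ p := hΨub0 (a - b) hd.le
      calc Ψ (a - b) ^ (2 / p) ≤ (c₂ / ((p - 1) * p) * (a - b) ^ p) ^ (2 / p) :=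
            Real.rpow_le_rpow (hΨnn _) h1 (by positivity)
        _ = A * ((a - b) ^ p) ^ (2 / p) := Real.mul_rpow hb2.le (Real.rpow_nonneg hd.le p)
        _ = A * (a - b) ^ ((2:ℝ)) := by
            rw [← Real.rpow_mul hd.le, show p * (2 / p) = 2 by field_simp]
    -- denominator bound
    have hden : B * S ^ (2 - p) ≤ (Ψ a + Ψ b) ^ ((2 - p) / p) := by
      have h1 : c₁ / p * (2:ℝ) ^ (-p) * S ^ p ≤ Ψ a + Ψ b := hsum a b
      have hexp : (0:ℝ) ≤ (2 - p) / p := div_nonneg (by linarith) hp0.le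
      calc B * S ^ (2 - p) = (c₁ / p * (2:ℝ) ^ (-p) * S ^ p) ^ ((2 - p) / p) := by
            rw [Real.mul_rpow hb1.le (Real.rpow_nonneg hS.le p), ← Real.rpow_mul hS.le,
              show p * ((2 - p) / p) = 2 - p by field_simp]
        _ ≤ (Ψ a + Ψ b) ^ ((2 - p) / p) := Real.rpow_le_rpow (by positivity) h1 hexp
    have hdenpos : 0 < B * S ^ (2 - p) := mul_pos hBpos (Real.rpow_pos_of_pos hS _)
    have hSinv : S ^ (p - 2 : ℝ) = (S ^ (2 - p : ℝ))⁻¹ := by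
      rw [show p - 2 = -(2 - p) by ring, Real.rpow_neg hS.le]
    have step1 : c₁ * B / A * Ψ (a - b) ^ (2 / p) / (Ψ a + Ψ b) ^ ((2 - p) / p)
        ≤ c₁ * B / A * (A * (a - b) ^ ((2:ℝ))) / (B * S ^ (2 - p)) := by
      apply div_le_div₀ (by positivity)
        (mul_le_mul_of_nonneg_left hnum hCpos.le) hdenpos hden
    have step2 : c₁ * B / A * (A * (a - b) ^ ((2:ℝ))) / (B * S ^ (2 - p))
        = c₁ * ((a - b) ^ ((2:ℝ)) * S ^ (p - 2)) := by
      rw [hSinv]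
      field_simp
    have step3 : c₁ * ((a - b) ^ ((2:ℝ)) * S ^ (p - 2)) ≤ (ψ a - ψ b) * (a - b) := by
      have h := mul_le_mul_of_nonneg_right (keyD a b hlt) hd.le
      calc c₁ * ((a - b) ^ ((2:ℝ)) * S ^ (p - 2))
          = c₁ * ((a - b) * S ^ (p - 2)) * (a - b) := by rw [hx2]; ring
        _ ≤ (ψ a - ψ b) * (a - b) := h
    linarith [step1, step2 ▸ step1, step3]
  intro a b hab0
  rcases lt_trichotomy a b with h | h | h
  · have h1 := main b a (by tauto) h
    have e1 : Ψ (a - b) = Ψ (b - a) := by rw [show a - b = -(b - a) by ring, hΨeven]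
    calc c₁ * B / A * Ψ (a - b) ^ (2 / p) / (Ψ a + Ψ b) ^ ((2 - p) / p)
        = c₁ * B / A * Ψ (b - a) ^ (2 / p) / (Ψ b + Ψ a) ^ ((2 - p) / p) := by
          rw [e1, add_comm (Ψ a)]
      _ ≤ (ψ b - ψ a) * (b - a) := h1
      _ = (ψ a - ψ b) * (a - b) := by ring
  · subst h
    have hΨz : Ψ 0 = 0 := by rw [hΨ]; simp
    rw [sub_self, hΨz, Real.zero_rpow (ne_of_gt (div_pos two_pos hp0))]
    simp
  · exact main a b hab0 h
end
end

section
/- Let J satisfy hypothesis (H₀), let Ψ ∈ Γ_{p,q} with p ≥ q > 1 and ψ = Ψ', and let Ω ⊂ ℝ^N be bounded and open. Let u : ℝ^N → ℝ be measurable with F(u) < ∞ and E(u) < ∞. If ℰ(u;φ) ≥ 0 for every nonnegative measurable φ : ℝ^N → ℝ with F(φ) < ∞ and E(φ) < ∞, and u ≥ 0 a.e. in Ω^c, then u ≥ 0 a.e. in Ω (maximum principle). -/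
open MeasureTheory Set Filter

noncomputable section

theorem stmt15 (N : ℕ) (q₀ : ℝ) (J : EuclideanSpace ℝ (Fin N) → ℝ) (hJ : kernelH0 N J q₀)
    (p q : ℝ) (hq : 1 < q) (hpq : q ≤ p) (Ψ : ℝ → ℝ) (hΨ : memGamma Ψ p q)
    (Ω : Set (EuclideanSpace ℝ (Fin N))) (hΩo : IsOpen Ω) (hΩb : Bornology.IsBounded Ω)
    (u : EuclideanSpace ℝ (Fin N) → ℝ) (hu : Measurable u)
    (huF : funcF N Ψ u < ⊤) (huE : funcE N Ψ J u < ⊤)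
    (hpositivity : ∀ φ : EuclideanSpace ℝ (Fin N) → ℝ, Measurable φ → (∀ x, 0 ≤ φ x) →
      funcF N Ψ φ < ⊤ → funcE N Ψ J φ < ⊤ → 0 ≤ interE N (deriv Ψ) J u φ)
    (hext : ∀ᵐ x ∂volume, x ∉ Ω → 0 ≤ u x) :
    ∀ᵐ x ∂volume, x ∈ Ω → 0 ≤ u x := by
  classical
  obtain ⟨hJm, hJpos, hJsymm, hJdiv, hq0, hJint⟩ := hJ
  obtain ⟨hconv, hevenΨ, hcd, hnonneg, hzero, hone, hbound⟩ := hΨ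
  have hp1 : (1:ℝ) < p := lt_of_lt_of_le hq hpq
  have hp0 : (0:ℝ) ≤ p := by linarith
  set ψ := deriv Ψ with hψdef
  have hψcont : Continuous ψ := hcd.continuous_deriv le_rfl
  have hΨcont : Continuous Ψ := hcd.continuous
  -- Case N = 0 handled by contradiction from the divergence of J near 0
  rcases Nat.eq_zero_or_pos N with hN0 | hN
  · exfalso
    subst hN0
    haveI : Subsingleton (EuclideanSpace ℝ (Fin 0)) :=
      ⟨fun a b => PiLp.ext fun i => i.elim0⟩
    have hcongr : ∀ z : EuclideanSpace ℝ (Fin 0),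
        ENNReal.ofReal (J z) = ENNReal.ofReal (J 0) := fun z => by
      rw [Subsingleton.elim z 0]
    have hle : (∫⁻ z in {z : EuclideanSpace ℝ (Fin 0) | ‖z‖ < 1},
        ENNReal.ofReal (J z)) < ⊤ := by
      calc (∫⁻ z in {z : EuclideanSpace ℝ (Fin 0) | ‖z‖ < 1}, ENNReal.ofReal (J z))
          = ∫⁻ _ in {z : EuclideanSpace ℝ (Fin 0) | ‖z‖ < 1}, ENNReal.ofReal (J 0) :=
            lintegral_congr fun z => hcongr z
        _ = ENNReal.ofReal (J 0) * volume {z : EuclideanSpace ℝ (Fin 0) | ‖z‖ < 1} :=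
            setLIntegral_const _ _
        _ ≤ ENNReal.ofReal (J 0) * volume (Metric.closedBall (0:EuclideanSpace ℝ (Fin 0)) 1) := by
            gcongr
            intro z hz
            simp only [Metric.mem_closedBall, dist_zero_right]
            exact le_of_lt hz
        _ < ⊤ := ENNReal.mul_lt_top ENNReal.ofReal_lt_top measure_closedBall_lt_top
    rw [hJdiv] at hle
    exact absurd hle (lt_irrefl _)
  -- Basic properties of Ψ and ψ
  have hΨpos : ∀ s : ℝ, s ≠ 0 → 0 < Ψ s := by
    intro s hs
    rcases (hnonneg s).lt_or_eq with h | h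
    · exact h
    · exfalso
      have h1 := (hbound s hs).1
      rw [← h, div_zero] at h1
      linarith
  have hψ0 : ψ 0 = 0 := by
    have hmin : IsLocalMin Ψ 0 :=
      Filter.Eventually.of_forall fun x => by rw [hzero]; exact hnonneg x
    exact hmin.deriv_eq_zero
  have hsψ : ∀ s : ℝ, s ≠ 0 → q * Ψ s ≤ s * ψ s := by
    intro s hs
    have := (hbound s hs).1
    exact (le_div_iff₀ (hΨpos s hs)).1 this
  have hspos : ∀ s : ℝ, s ≠ 0 → 0 < s * ψ s := fun s hs =>
    lt_of_lt_of_le (mul_pos (by linarith) (hΨpos s hs)) (hsψ s hs)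
  have hψpos : ∀ s : ℝ, 0 < s → 0 < ψ s := by
    intro s hs
    have h := hspos s hs.ne'
    nlinarith
  have hψneg : ∀ s : ℝ, s < 0 → ψ s < 0 := by
    intro s hs
    have h := hspos s hs.ne
    nlinarith
  have hψub : ∀ s : ℝ, s * ψ s ≤ p * Ψ s := by
    intro s
    rcases eq_or_ne s 0 with rfl | hs
    · simp [hψ0, hzero]
    · have := (hbound s hs).2
      exact (div_le_iff₀ (hΨpos s hs)).1 this
  -- Monotonicity of Ψ with respect to absolute value
  have hΨabs : ∀ s : ℝ, Ψ s = Ψ |s| := by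
    intro s
    rcases abs_choice s with h | h
    · rw [h]
    · rw [h, hevenΨ]
  have hmono : ∀ a b : ℝ, |a| ≤ |b| → Ψ a ≤ Ψ b := by
    intro a b hab
    rw [hΨabs a, hΨabs b]
    rcases (abs_nonneg b).eq_or_lt with hb0 | hb0
    · have ha0 : |a| = 0 := le_antisymm (hab.trans hb0.ge) (abs_nonneg a)
      rw [ha0, ← hb0]
    · set t : ℝ := |a| / |b| with ht
      have ht0 : 0 ≤ t := div_nonneg (abs_nonneg a) (abs_nonneg b)
      have ht1 : t ≤ 1 := (div_le_one hb0).2 hab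
      have hcx := hconv.2 (Set.mem_univ |b|) (Set.mem_univ (0:ℝ)) ht0
        (by linarith : (0:ℝ) ≤ 1 - t) (by ring)
      simp only [smul_eq_mul, mul_zero, add_zero] at hcx
      have htb : t * |b| = |a| := div_mul_cancel₀ _ hb0.ne'
      rw [htb, hzero, mul_zero, add_zero] at hcx
      have hΨb : 0 ≤ Ψ |b| := hnonneg _
      nlinarith
  -- The test function φ = u⁻
  set φ : EuclideanSpace ℝ (Fin N) → ℝ := fun x => max (-(u x)) 0 with hφdef
  have hφmeas : Measurable φ := (hu.neg).max measurable_const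
  have hφnn : ∀ x, 0 ≤ φ x := fun x => le_max_right _ _
  have hφabs : ∀ x, |φ x| ≤ |u x| := by
    intro x
    rw [abs_of_nonneg (hφnn x)]
    exact max_le (neg_le_abs _) (abs_nonneg _)
  have hφdiff : ∀ x y, |φ x - φ y| ≤ |u x - u y| := by
    intro x y
    have h := abs_max_sub_max_le_abs (-(u x)) (-(u y)) 0
    calc |φ x - φ y| ≤ |(-(u x)) - (-(u y))| := h
      _ = |u x - u y| := by rw [← abs_neg]; ring_nf
  have hφF : funcF N Ψ φ < ⊤ := by
    refine lt_of_le_of_lt (lintegral_mono fun x => ?_) huF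
    exact ENNReal.ofReal_le_ofReal (hmono _ _ (hφabs x))
  have hφE : funcE N Ψ J φ < ⊤ := by
    refine lt_of_le_of_lt (mul_le_mul_right
      (lintegral_mono fun x => lintegral_mono fun y => ?_) _) huE
    rcases le_or_gt 0 (J (x - y)) with hJ0 | hJ0
    · exact ENNReal.ofReal_le_ofReal
        (mul_le_mul_of_nonneg_right (hmono _ _ (hφdiff x y)) hJ0)
    · rw [ENNReal.ofReal_of_nonpos (mul_nonpos_of_nonneg_of_nonpos (hnonneg _) hJ0.le)]
      exact zero_le
  have hpos := hpositivity φ hφmeas hφnn hφF hφE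
  -- The integrand g and inner integral I
  set g : EuclideanSpace ℝ (Fin N) → EuclideanSpace ℝ (Fin N) → ℝ :=
    fun x y => ψ (u x - u y) * (φ x - φ y) * J (x - y) with hgdef
  set I : EuclideanSpace ℝ (Fin N) → ℝ := fun x => ∫ y, g x y with hIdef
  -- sign of the inner factor
  have hsign : ∀ a b : ℝ, ψ (a - b) * (max (-a) 0 - max (-b) 0) ≤ 0 := by
    intro a b
    rcases le_total a b with hab | hab
    · have h1 : ψ (a - b) ≤ 0 := by
        rcases (sub_nonpos.2 hab).lt_or_eq with h | h
        · exact (hψneg _ h).le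
        · rw [h, hψ0]
      have h2 : max (-b) 0 ≤ max (-a) 0 := max_le_max (neg_le_neg hab) le_rfl
      exact mul_nonpos_of_nonpos_of_nonneg h1 (by linarith)
    · have h1 : 0 ≤ ψ (a - b) := by
        rcases (sub_nonneg.2 hab).lt_or_eq with h | h
        · exact (hψpos _ h).le
        · rw [← h, hψ0]
      have h2 : max (-a) 0 ≤ max (-b) 0 := max_le_max (neg_le_neg hab) le_rfl
      exact mul_nonpos_of_nonneg_of_nonpos h1 (by linarith)
  have hgle : ∀ x y, g x y ≤ 0 := by
    intro x y
    rcases eq_or_ne x y with rfl | hxy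
    · simp [hgdef, hψ0]
    · have hJ0 : 0 < J (x - y) := hJpos _ (sub_ne_zero.2 hxy)
      exact mul_nonpos_of_nonpos_of_nonneg (hsign (u x) (u y)) hJ0.le
  -- absolute value bound
  have hfac : ∀ a b : ℝ, |ψ (a - b) * (max (-a) 0 - max (-b) 0)| ≤ p * Ψ (a - b) := by
    intro a b
    rw [abs_mul]
    have h1 : |max (-a) 0 - max (-b) 0| ≤ |a - b| := by
      have h := abs_max_sub_max_le_abs (-a) (-b) 0
      calc |max (-a) 0 - max (-b) 0| ≤ |(-a) - (-b)| := h
        _ = |a - b| := by rw [← abs_neg]; ring_nf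
    calc |ψ (a - b)| * |max (-a) 0 - max (-b) 0| ≤ |ψ (a - b)| * |a - b| := by
          exact mul_le_mul_of_nonneg_left h1 (abs_nonneg _)
      _ = |(a - b) * ψ (a - b)| := by rw [abs_mul]; ring
      _ = (a - b) * ψ (a - b) := by
          rcases eq_or_ne (a - b) 0 with h | h
          · rw [h]; simp [hψ0]
          · exact abs_of_pos (hspos _ h)
      _ ≤ p * Ψ (a - b) := hψub _
  have hgabs : ∀ x y, |g x y| ≤ p * (Ψ (u x - u y) * J (x - y)) := by
    intro x y
    rcases eq_or_ne x y with rfl | hxy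
    · simp [hgdef, hψ0, sub_self, hzero]
    · have hJ0 : 0 < J (x - y) := hJpos _ (sub_ne_zero.2 hxy)
      rw [hgdef, abs_mul, abs_of_pos hJ0]
      calc |ψ (u x - u y) * (φ x - φ y)| * J (x - y)
          ≤ (p * Ψ (u x - u y)) * J (x - y) :=
            mul_le_mul_of_nonneg_right (hfac (u x) (u y)) hJ0.le
        _ = p * (Ψ (u x - u y) * J (x - y)) := by ring
  have hgnonnegRHS : ∀ x y, 0 ≤ p * (Ψ (u x - u y) * J (x - y)) := fun x y =>
    le_trans (abs_nonneg _) (hgabs x y)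
  -- K x : the inner energy integral
  set K : EuclideanSpace ℝ (Fin N) → ENNReal :=
    fun x => ∫⁻ y, ENNReal.ofReal (Ψ (u x - u y) * J (x - y)) with hKdef
  have hKmeas : Measurable K := by
    apply Measurable.lintegral_prod_right'
      (f := fun z : EuclideanSpace ℝ (Fin N) × EuclideanSpace ℝ (Fin N) =>
        ENNReal.ofReal (Ψ (u z.1 - u z.2) * J (z.1 - z.2)))
    exact ENNReal.measurable_ofReal.comp
      (((hΨcont.measurable).comp ((hu.comp measurable_fst).sub (hu.comp measurable_snd))).mul
        (hJm.comp (measurable_fst.sub measurable_snd)))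
  have hKfin : (∫⁻ x, K x) < ⊤ := by
    by_contra h
    rw [not_lt, top_le_iff] at h
    have : funcE N Ψ J u = ⊤ := by
      rw [funcE, h, ENNReal.mul_top (by norm_num)]
    rw [this] at huE
    exact absurd huE (lt_irrefl _)
  have hKae : ∀ᵐ x ∂(volume : Measure (EuclideanSpace ℝ (Fin N))), K x < ⊤ :=
    ae_lt_top hKmeas hKfin.ne
  -- measurability of g
  have hgm : ∀ x, Measurable (fun y => g x y) := by
    intro x
    exact ((hψcont.measurable.comp (measurable_const.sub hu)).mul
      (measurable_const.sub hφmeas)).mul (hJm.comp (measurable_const.sub measurable_id))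
  have hgmprod : Measurable (Function.uncurry g) := by
    exact ((hψcont.measurable.comp ((hu.comp measurable_fst).sub (hu.comp measurable_snd))).mul
      ((hφmeas.comp measurable_fst).sub (hφmeas.comp measurable_snd))).mul
      (hJm.comp (measurable_fst.sub measurable_snd))
  -- integrability of g(x,·) when K x < ⊤
  have hgnormle : ∀ x, (∫⁻ y, ENNReal.ofReal ‖g x y‖) ≤ ENNReal.ofReal p * K x := by
    intro x
    rw [hKdef, ← lintegral_const_mul' _ _ ENNReal.ofReal_ne_top]
    refine lintegral_mono fun y => ?_
    rw [← ENNReal.ofReal_mul hp0]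
    exact ENNReal.ofReal_le_ofReal (by rw [Real.norm_eq_abs]; exact hgabs x y)
  have hgint : ∀ x, K x < ⊤ → Integrable (fun y => g x y) := by
    intro x hKx
    refine ⟨(hgm x).aestronglyMeasurable, ?_⟩
    rw [hasFiniteIntegral_iff_norm]
    exact lt_of_le_of_lt (hgnormle x)
      (ENNReal.mul_lt_top ENNReal.ofReal_lt_top hKx)
  -- I is nonpositive
  have hIle : ∀ x, I x ≤ 0 := fun x => integral_nonpos fun y => hgle x y
  -- I is integrable
  have hImeas : StronglyMeasurable I :=
    hgmprod.stronglyMeasurable.integral_prod_right'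
  have hInorm : ∀ x, K x < ⊤ → (‖I x‖₊ : ENNReal) ≤ ENNReal.ofReal p * K x := by
    intro x hKx
    have hfin : ENNReal.ofReal p * K x ≠ ⊤ :=
      ENNReal.mul_ne_top ENNReal.ofReal_ne_top hKx.ne
    have h1 : ‖I x‖ ≤ (∫⁻ y, ENNReal.ofReal ‖g x y‖).toReal :=
      norm_integral_le_lintegral_norm _
    have h2 : (∫⁻ y, ENNReal.ofReal ‖g x y‖).toReal ≤ (ENNReal.ofReal p * K x).toReal :=
      ENNReal.toReal_mono hfin (hgnormle x)
    calc (‖I x‖₊ : ENNReal) = ENNReal.ofReal ‖I x‖ := (ofReal_norm _).symm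
      _ ≤ ENNReal.ofReal ((ENNReal.ofReal p * K x).toReal) :=
          ENNReal.ofReal_le_ofReal (h1.trans h2)
      _ ≤ ENNReal.ofReal p * K x := ENNReal.ofReal_toReal_le
  have hIint : Integrable I := by
    refine ⟨hImeas.aestronglyMeasurable, ?_⟩
    rw [hasFiniteIntegral_def]
    calc (∫⁻ x, (‖I x‖₊ : ENNReal)) ≤ ∫⁻ x, ENNReal.ofReal p * K x :=
          lintegral_mono_ae (hKae.mono fun x hx => hInorm x hx)
      _ = ENNReal.ofReal p * ∫⁻ x, K x := lintegral_const_mul' _ _ ENNReal.ofReal_ne_top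
      _ < ⊤ := ENNReal.mul_lt_top ENNReal.ofReal_lt_top hKfin
  -- from positivity : ∫ I = 0, hence I = 0 a.e.
  have hSnn : 0 ≤ ∫ x, I x := by
    have : interE N (deriv Ψ) J u φ = (1/2 : ℝ) * ∫ x, I x := rfl
    rw [this] at hpos
    linarith
  have hS0 : ∫ x, I x = 0 := le_antisymm (integral_nonpos hIle) hSnn
  have hIzero : ∀ᵐ x ∂(volume : Measure (EuclideanSpace ℝ (Fin N))), I x = 0 := by
    have hneg : (fun x => -I x) =ᵐ[volume] 0 :=
      (integral_eq_zero_iff_of_nonneg (fun x => neg_nonneg.2 (hIle x)) hIint.neg).1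
        (by rw [integral_neg, hS0, neg_zero])
    filter_upwards [hneg] with x hx
    simpa [neg_eq_zero] using hx
  -- volume of Ωᶜ is positive
  haveI : Nontrivial (EuclideanSpace ℝ (Fin N)) := by
    refine ⟨0, EuclideanSpace.single (⟨0, hN⟩ : Fin N) (1:ℝ), fun h => ?_⟩
    have := congrArg (fun v => v (⟨0, hN⟩ : Fin N)) h
    simp [EuclideanSpace.single_apply] at this
  have hvoluniv : volume (Set.univ : Set (EuclideanSpace ℝ (Fin N))) = ⊤ :=
    measure_univ_of_isAddLeftInvariant volume
  have hΩfin : volume Ω < ⊤ := hΩb.measure_lt_top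
  have hΩc : volume Ωᶜ ≠ 0 := by
    intro h0
    have : volume (Set.univ : Set (EuclideanSpace ℝ (Fin N))) ≤ volume Ω + volume Ωᶜ := by
      rw [← Set.union_compl_self Ω]
      exact measure_union_le _ _
    rw [hvoluniv, h0, add_zero, top_le_iff] at this
    rw [this] at hΩfin
    exact absurd hΩfin (lt_irrefl _)
  -- conclusion
  set S : Set (EuclideanSpace ℝ (Fin N)) := {y | y ∉ Ω → 0 ≤ u y} with hSdef
  have hScompl : volume Sᶜ = 0 := by
    have h := ae_iff.1 hext
    simpa [hSdef, Set.compl_setOf] using h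
  filter_upwards [hIzero, hKae] with x hIx hKx
  intro hxΩ
  by_contra hux
  push_neg at hux
  -- g (x, ·) vanishes a.e.
  have hint := hgint x hKx
  have hIx' : ∫ y, g x y = 0 := hIx
  have hgz : ∀ᵐ y ∂(volume : Measure (EuclideanSpace ℝ (Fin N))), g x y = 0 := by
    have hneg : (fun y => -g x y) =ᵐ[volume] 0 :=
      (integral_eq_zero_iff_of_nonneg (fun y => neg_nonneg.2 (hgle x y)) hint.neg).1
        (by rw [integral_neg, hIx', neg_zero])
    filter_upwards [hneg] with y hy
    simpa [neg_eq_zero] using hy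
  -- but g (x, ·) is strictly negative on Ωᶜ ∩ S
  have hsub : Ωᶜ ∩ S ⊆ {y | g x y ≠ 0} := by
    rintro y ⟨hyc, hyS⟩
    have huy : 0 ≤ u y := hyS hyc
    have hyx : x ≠ y := fun h => hyc (h ▸ hxΩ)
    have hJ0 : 0 < J (x - y) := hJpos _ (sub_ne_zero.2 hyx)
    have hs : u x - u y < 0 := by linarith
    have hψn : ψ (u x - u y) < 0 := hψneg _ hs
    have hφx : φ x = -u x := max_eq_left (by linarith)
    have hφy : φ y = 0 := max_eq_right (by linarith)
    have hfacpos : 0 < φ x - φ y := by rw [hφx, hφy]; linarith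
    have : g x y < 0 :=
      mul_neg_of_neg_of_pos (mul_neg_of_neg_of_pos hψn hfacpos) hJ0
    exact this.ne
  have hnull : volume (Ωᶜ ∩ S) = 0 :=
    measure_mono_null hsub (ae_iff.1 hgz)
  have : volume Ωᶜ = 0 := by
    have hsub2 : Ωᶜ ⊆ (Ωᶜ ∩ S) ∪ Sᶜ := by
      intro y hy
      by_cases hyS : y ∈ S
      · exact Or.inl ⟨hy, hyS⟩
      · exact Or.inr hyS
    refine le_antisymm ?_ zero_le
    calc volume Ωᶜ ≤ volume ((Ωᶜ ∩ S) ∪ Sᶜ) := measure_mono hsub2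
      _ ≤ volume (Ωᶜ ∩ S) + volume Sᶜ := measure_union_le _ _
      _ = 0 := by rw [hnull, hScompl, add_zero]
  exact hΩc this
end
end
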